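/- arXiv:2012.13145 — 5 statements merged into one kernel-verified Lean document; each statement's English description precedes it below -/
import Mathlib

section
/- For the transfer operators 𝓛_k (k ≥ 1) of a piecewise affine expanding Markov map with expansion constant λ > 1, acting on the piecewise Sobolev space W^{r,1} with norm ‖h‖_r = Σ_{l=0}^r ∫|h^{(l)}|, one has the Lasota–Yorke inequalities: ‖𝓛_k h‖_r ≤ λ^{-(k-1)} ‖h‖_r, and for r ≥ 1, ‖𝓛_k h‖_r ≤ λ^{-(k+r-1)} ‖h‖_r + λ^{-(k-1)} ‖h‖_{r-1}. -/
open Set MeasureTheory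

lemma ly_key
    (N : ℕ) (I : Fin N → Set ℝ)
    (hIopen : ∀ j, ∃ a b : ℝ, a < b ∧ I j = Set.Ioo a b)
    (lam : Fin N → ℝ) (lam0 : ℝ) (hlam0 : 1 < lam0)
    (hlam : ∀ j, lam0 ≤ lam j)
    (A : Fin N → Fin N → ℝ) (hA01 : ∀ i j, A i j = 0 ∨ A i j = 1)
    (g : Fin N → ℝ → ℝ)
    (hg : ∀ j x, HasDerivAt (g j) (lam j)⁻¹ x)
    (hgI : ∀ i j, A j i = 1 → ∀ x ∈ I i, g j x ∈ I j)
    (idx : ℝ → Fin N) (hidx : ∀ j, ∀ x ∈ I j, idx x = j)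
    (L : ℕ → (ℝ → ℝ) → (ℝ → ℝ))
    (hL : ∀ m φ x, L m φ x = ∑ j, (lam j) ^ (-(m : ℤ)) * A j (idx x) * φ (g j x))
    (m : ℕ) (hm : 1 ≤ m) (φ : ℝ → ℝ)
    (hφ : IntegrableOn φ (⋃ j, I j)) :
    ∫ x in ⋃ j, I j, |L m φ x| ≤ (lam0 ^ (m - 1))⁻¹ * ∫ x in ⋃ j, I j, |φ x| := by
  classical
  have hlam0pos : (0:ℝ) < lam0 := lt_trans one_pos hlam0
  have hlpos : ∀ j, 0 < lam j := fun j => lt_of_lt_of_le hlam0pos (hlam j)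
  have hIm : ∀ j, MeasurableSet (I j) := by
    intro j; obtain ⟨a, b, -, hab⟩ := hIopen j; rw [hab]; exact measurableSet_Ioo
  have hdisj : Pairwise (Function.onFun Disjoint I) := by
    intro i j hij
    refine Set.disjoint_left.2 fun x hxi hxj => hij ?_
    rw [← hidx i x hxi, hidx j x hxj]
  have hgaff : ∀ j x, g j x = (lam j)⁻¹ * x + g j 0 := by
    intro j x
    have hdiff : ∀ t : ℝ, HasDerivAt (fun t => g j t - (lam j)⁻¹ * t) 0 t := by
      intro t
      have : HasDerivAt (fun t => g j t - (lam j)⁻¹ * t) ((lam j)⁻¹ - (lam j)⁻¹ * 1) t :=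
        (hg j t).sub ((hasDerivAt_id t).const_mul _)
      simpa using this
    have hconst : g j x - (lam j)⁻¹ * x = g j 0 - (lam j)⁻¹ * 0 :=
      is_const_of_deriv_eq_zero (fun t => (hdiff t).differentiableAt)
        (fun t => (hdiff t).deriv) x 0
    simp at hconst
    linarith
  have hginj : ∀ j, Function.Injective (g j) := by
    intro j x y hxy
    rw [hgaff j x, hgaff j y] at hxy
    have hne : (lam j)⁻¹ ≠ 0 := inv_ne_zero (ne_of_gt (hlpos j))
    exact mul_left_cancel₀ hne (add_right_cancel hxy)
  have himg : ∀ j (s : Set ℝ), g j '' s = (fun x => lam j * (x - g j 0)) ⁻¹' s := by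
    intro j s
    have hne : lam j ≠ 0 := ne_of_gt (hlpos j)
    ext x
    simp only [Set.mem_image, Set.mem_preimage]
    constructor
    · rintro ⟨y, hy, rfl⟩
      rw [hgaff]
      have : lam j * ((lam j)⁻¹ * y + g j 0 - g j 0) = y := by field_simp; ring
      rwa [this]
    · intro hx
      refine ⟨lam j * (x - g j 0), hx, ?_⟩
      rw [hgaff]
      field_simp
      ring
  have hgim : ∀ j (s : Set ℝ), MeasurableSet s → MeasurableSet (g j '' s) := by
    intro j s hs
    rw [himg]
    exact (measurable_const.mul (measurable_id.sub measurable_const)) hs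
  have hcov : ∀ j (s : Set ℝ), MeasurableSet s →
      (∫ x in g j '' s, |φ x|) = (lam j)⁻¹ * ∫ x in s, |φ (g j x)| := by
    intro j s hs
    rw [integral_image_eq_integral_abs_deriv_smul hs (fun x _ => (hg j x).hasDerivWithinAt)
      ((hginj j).injOn) (fun x => |φ x|)]
    simp only [abs_of_pos (inv_pos.2 (hlpos j)), smul_eq_mul]
    exact integral_const_mul _ _
  have hcovInt : ∀ j (s : Set ℝ), MeasurableSet s → IntegrableOn φ (g j '' s) →
      IntegrableOn (fun x => φ (g j x)) s := by
    intro j s hs hintim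
    have h1 := (integrableOn_image_iff_integrableOn_abs_deriv_smul hs
      (fun x _ => (hg j x).hasDerivWithinAt) ((hginj j).injOn) φ).1 hintim
    have hcne : |(lam j)⁻¹| ≠ 0 := by
      simp [inv_ne_zero (ne_of_gt (hlpos j)), abs_ne_zero, ne_of_gt (hlpos j)]
    have h2 := h1.const_mul (|(lam j)⁻¹|)⁻¹
    simpa [IntegrableOn, smul_eq_mul, ← mul_assoc, inv_mul_cancel₀ hcne, mul_inv_cancel₀ (abs_ne_zero.2 (ne_of_gt (hlpos j)))] using h2
  have hφj : ∀ j, IntegrableOn φ (I j) := fun j => hφ.mono_set (Set.subset_iUnion I j)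
  have htermInt : ∀ i j, IntegrableOn (fun x => (lam j) ^ (-(m:ℤ)) * A j i * φ (g j x)) (I i) := by
    intro i j
    rcases hA01 j i with h0 | h1
    · have : (fun x => (lam j) ^ (-(m:ℤ)) * A j i * φ (g j x)) = fun _ => (0:ℝ) := by
        funext x; rw [h0]; ring
      rw [this]
      exact integrableOn_zero
    · have hsub : g j '' I i ⊆ I j := by
        rintro _ ⟨x, hx, rfl⟩; exact hgI i j h1 x hx
      exact (hcovInt j (I i) (hIm i) ((hφj j).mono_set hsub)).const_mul _
  have hSnn : ∀ j i, 0 ≤ A j i * ∫ x in g j '' I i, |φ x| := by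
    intro j i
    have hAnn : 0 ≤ A j i := by rcases hA01 j i with h|h <;> simp [h]
    exact mul_nonneg hAnn (integral_nonneg fun x => abs_nonneg _)
  have habs : ∀ i j, (∫ x in I i, |(lam j) ^ (-(m:ℤ)) * A j i * φ (g j x)|)
      = (lam j) ^ (-(m:ℤ)) * lam j * (A j i * ∫ x in g j '' I i, |φ x|) := by
    intro i j
    have hzp : (0:ℝ) < (lam j) ^ (-(m:ℤ)) := zpow_pos (hlpos j) _
    have hAnn : 0 ≤ A j i := by rcases hA01 j i with h|h <;> simp [h]
    have habs' : ∀ x, |(lam j) ^ (-(m:ℤ)) * A j i * φ (g j x)|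
        = ((lam j) ^ (-(m:ℤ)) * A j i) * |φ (g j x)| := by
      intro x
      rw [abs_mul, abs_mul, abs_of_pos hzp, abs_of_nonneg hAnn]
    simp only [habs']
    rw [integral_const_mul]
    rcases hA01 j i with h0 | h1
    · simp [h0]
    · rw [h1, hcov j (I i) (hIm i)]
      have : lam j ≠ 0 := ne_of_gt (hlpos j)
      field_simp
  have hLInt : ∀ i, IntegrableOn (fun x => |L m φ x|) (I i) := by
    intro i
    have hFint : IntegrableOn (fun x => |∑ j, (lam j) ^ (-(m:ℤ)) * A j i * φ (g j x)|) (I i) :=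
      (integrable_finset_sum _ (fun j _ => htermInt i j)).abs
    refine hFint.congr_fun (fun x hx => ?_) (hIm i)
    simp only [hL, hidx i x hx]
  have hpiece : ∀ i, (∫ x in I i, |L m φ x|)
      ≤ ∑ j, (lam j) ^ (-(m:ℤ)) * lam j * (A j i * ∫ x in g j '' I i, |φ x|) := by
    intro i
    have hFeq : Set.EqOn (fun x => |L m φ x|)
        (fun x => |∑ j, (lam j) ^ (-(m:ℤ)) * A j i * φ (g j x)|) (I i) := by
      intro x hx
      simp only [hL, hidx i x hx]
    rw [setIntegral_congr_fun (hIm i) hFeq]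
    have hFint : IntegrableOn (fun x => ∑ j, (lam j) ^ (-(m:ℤ)) * A j i * φ (g j x)) (I i) :=
      integrable_finset_sum _ (fun j _ => htermInt i j)
    calc ∫ x in I i, |∑ j, (lam j) ^ (-(m:ℤ)) * A j i * φ (g j x)|
        ≤ ∫ x in I i, ∑ j, |(lam j) ^ (-(m:ℤ)) * A j i * φ (g j x)| := by
          refine integral_mono hFint.abs
            (integrable_finset_sum _ fun j _ => (htermInt i j).abs) ?_
          intro x
          exact Finset.abs_sum_le_sum_abs _ _
      _ = ∑ j, ∫ x in I i, |(lam j) ^ (-(m:ℤ)) * A j i * φ (g j x)| :=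
          integral_finset_sum _ (fun j _ => (htermInt i j).abs)
      _ = ∑ j, (lam j) ^ (-(m:ℤ)) * lam j * (A j i * ∫ x in g j '' I i, |φ x|) :=
          Finset.sum_congr rfl fun j _ => habs i j
  have hScol : ∀ j, (∑ i, A j i * ∫ x in g j '' I i, |φ x|) ≤ ∫ x in I j, |φ x| := by
    intro j
    have hsumeq : (∑ i, A j i * ∫ x in g j '' I i, |φ x|)
        = ∑ i ∈ Finset.univ.filter (fun i => A j i = 1), ∫ x in g j '' I i, |φ x| := by
      rw [Finset.sum_filter]
      refine Finset.sum_congr rfl fun i _ => ?_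
      rcases hA01 j i with h|h <;> simp [h]
    rw [hsumeq]
    have hsub : ∀ i ∈ Finset.univ.filter (fun i => A j i = 1), g j '' I i ⊆ I j := by
      intro i hi
      rintro _ ⟨x, hx, rfl⟩
      exact hgI i j (by simpa using hi) x hx
    have hmeas : ∀ i ∈ Finset.univ.filter (fun i => A j i = 1), MeasurableSet (g j '' I i) :=
      fun i _ => hgim j _ (hIm i)
    have hdint : ∀ i ∈ Finset.univ.filter (fun i => A j i = 1),
        IntegrableOn (fun x => |φ x|) (g j '' I i) :=
      fun i hi => ((hφj j).mono_set (hsub i hi)).abs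
    have hpd : (↑(Finset.univ.filter (fun i => A j i = 1)) : Set (Fin N)).Pairwise
        (Function.onFun Disjoint fun i => g j '' I i) := by
      intro a _ b _ hab
      exact (Set.disjoint_image_iff (hginj j)).2 (hdisj hab)
    rw [← integral_biUnion_finset _ hmeas hpd hdint]
    exact setIntegral_mono_set ((hφj j).abs)
      (Filter.Eventually.of_forall fun x => abs_nonneg _)
      (HasSubset.Subset.eventuallyLE (Set.iUnion₂_subset hsub))
  have hcoef : ∀ j, (lam j) ^ (-(m:ℤ)) * lam j ≤ (lam0 ^ (m - 1))⁻¹ := by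
    intro j
    have hne : lam j ≠ 0 := ne_of_gt (hlpos j)
    have hm' : (-(m:ℤ)) = (-((m - 1 : ℕ) : ℤ)) + (-1) := by omega
    have h1 : (lam j) ^ (-(m:ℤ)) * lam j = ((lam j) ^ (m - 1))⁻¹ := by
      rw [hm', zpow_add₀ hne, zpow_neg, zpow_natCast, zpow_neg_one]
      field_simp
    rw [h1]
    exact inv_anti₀ (pow_pos hlam0pos _) (pow_le_pow_left₀ hlam0pos.le (hlam j) _)
  have hLIntU : IntegrableOn (fun x => |L m φ x|) (⋃ j, I j) :=
    integrableOn_finite_iUnion.2 hLInt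
  have hsplitL : (∫ x in ⋃ j, I j, |L m φ x|) = ∑ i, ∫ x in I i, |L m φ x| := by
    rw [integral_iUnion hIm hdisj hLIntU, tsum_fintype]
  have hsplitφ : (∫ x in ⋃ j, I j, |φ x|) = ∑ i, ∫ x in I i, |φ x| := by
    rw [integral_iUnion hIm hdisj hφ.abs, tsum_fintype]
  rw [hsplitL, hsplitφ]
  calc (∑ i, ∫ x in I i, |L m φ x|)
      ≤ ∑ i, ∑ j, (lam j) ^ (-(m:ℤ)) * lam j * (A j i * ∫ x in g j '' I i, |φ x|) :=
        Finset.sum_le_sum fun i _ => hpiece i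
    _ = ∑ j, (lam j) ^ (-(m:ℤ)) * lam j * ∑ i, (A j i * ∫ x in g j '' I i, |φ x|) := by
        rw [Finset.sum_comm]
        exact Finset.sum_congr rfl fun j _ => (Finset.mul_sum _ _ _).symm
    _ ≤ ∑ j, (lam0 ^ (m - 1))⁻¹ * ∫ x in I j, |φ x| := by
        refine Finset.sum_le_sum fun j _ => ?_
        have h1 : 0 ≤ ∑ i, A j i * ∫ x in g j '' I i, |φ x| :=
          Finset.sum_nonneg fun i _ => hSnn j i
        have h2 : 0 ≤ (lam0 ^ (m - 1))⁻¹ := inv_nonneg.2 (pow_nonneg hlam0pos.le _)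
        exact mul_le_mul (hcoef j) (hScol j) h1 h2
    _ = (lam0 ^ (m - 1))⁻¹ * ∑ j, ∫ x in I j, |φ x| := (Finset.mul_sum _ _ _).symm

/-- Lasota–Yorke inequalities for the transfer operators `𝓛_k` (`k ≥ 1`) of a
piecewise affine expanding Markov map on the piecewise Sobolev space `W^{r,1}`. The `W^{r,1}`
norm of `𝓛_k h` is expressed through its piecewise derivatives `(𝓛_k h)^{(l)} = 𝓛_{k+l} h^{(l)}`. -/
theorem stmt1
    (N : ℕ) (I : Fin N → Set ℝ)
    (hIopen : ∀ j, ∃ a b : ℝ, a < b ∧ I j = Set.Ioo a b)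
    (lam : Fin N → ℝ) (lam0 : ℝ) (hlam0 : 1 < lam0)
    (hlam : ∀ j, lam0 ≤ lam j)
    (A : Fin N → Fin N → ℝ) (hA01 : ∀ i j, A i j = 0 ∨ A i j = 1)
    (g : Fin N → ℝ → ℝ)
    (hg : ∀ j x, HasDerivAt (g j) (lam j)⁻¹ x)
    (hgI : ∀ i j, A j i = 1 → ∀ x ∈ I i, g j x ∈ I j)
    (idx : ℝ → Fin N) (hidx : ∀ j, ∀ x ∈ I j, idx x = j)
    (L : ℕ → (ℝ → ℝ) → (ℝ → ℝ))
    (hL : ∀ m φ x, L m φ x = ∑ j, (lam j) ^ (-(m : ℤ)) * A j (idx x) * φ (g j x))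
    (r k : ℕ) (hk : 1 ≤ k) (h : ℝ → ℝ)
    (dh : ℕ → ℝ → ℝ) (hdh0 : dh 0 = h)
    (hdh : ∀ l < r, ∀ j, ∀ x ∈ I j, HasDerivAt (dh l) (dh (l + 1) x) x)
    (U : Set ℝ) (hU : U = ⋃ j, I j)
    (hint : ∀ l ≤ r, IntegrableOn (dh l) U) :
    (∑ l ∈ Finset.range (r + 1), ∫ x in U, |L (k + l) (dh l) x|)
        ≤ (lam0 ^ (k - 1))⁻¹ * ∑ l ∈ Finset.range (r + 1), ∫ x in U, |dh l x| ∧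
      (1 ≤ r →
        (∑ l ∈ Finset.range (r + 1), ∫ x in U, |L (k + l) (dh l) x|)
          ≤ (lam0 ^ (k + r - 1))⁻¹ * (∑ l ∈ Finset.range (r + 1), ∫ x in U, |dh l x|)
            + (lam0 ^ (k - 1))⁻¹ * (∑ l ∈ Finset.range r, ∫ x in U, |dh l x|)) := by
  have hlam0pos : (0:ℝ) < lam0 := lt_trans one_pos hlam0
  have key : ∀ l ≤ r, (∫ x in U, |L (k + l) (dh l) x|)
      ≤ (lam0 ^ (k + l - 1))⁻¹ * ∫ x in U, |dh l x| := by
    intro l hl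
    rw [hU]
    exact ly_key N I hIopen lam lam0 hlam0 hlam A hA01 g hg hgI idx hidx L hL (k + l)
      (le_trans hk (Nat.le_add_right k l)) (dh l) (by rw [← hU]; exact hint l hl)
  have ha : ∀ l, 0 ≤ ∫ x in U, |dh l x| := fun l => integral_nonneg fun x => abs_nonneg _
  have hcmono : ∀ l, (lam0 ^ (k + l - 1))⁻¹ ≤ (lam0 ^ (k - 1))⁻¹ := by
    intro l
    exact inv_anti₀ (pow_pos hlam0pos _)
      (pow_le_pow_right₀ hlam0.le (by omega))
  have key' : ∀ l ≤ r, (∫ x in U, |L (k + l) (dh l) x|)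
      ≤ (lam0 ^ (k - 1))⁻¹ * ∫ x in U, |dh l x| :=
    fun l hl => le_trans (key l hl) (mul_le_mul_of_nonneg_right (hcmono l) (ha l))
  constructor
  · calc (∑ l ∈ Finset.range (r + 1), ∫ x in U, |L (k + l) (dh l) x|)
        ≤ ∑ l ∈ Finset.range (r + 1), (lam0 ^ (k - 1))⁻¹ * ∫ x in U, |dh l x| :=
          Finset.sum_le_sum fun l hl => key' l (Nat.lt_succ_iff.1 (Finset.mem_range.1 hl))
      _ = (lam0 ^ (k - 1))⁻¹ * ∑ l ∈ Finset.range (r + 1), ∫ x in U, |dh l x| :=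
          (Finset.mul_sum _ _ _).symm
  · intro hr
    rw [Finset.sum_range_succ]
    have h1 : (∑ l ∈ Finset.range r, ∫ x in U, |L (k + l) (dh l) x|)
        ≤ (lam0 ^ (k - 1))⁻¹ * ∑ l ∈ Finset.range r, ∫ x in U, |dh l x| := by
      calc (∑ l ∈ Finset.range r, ∫ x in U, |L (k + l) (dh l) x|)
          ≤ ∑ l ∈ Finset.range r, (lam0 ^ (k - 1))⁻¹ * ∫ x in U, |dh l x| :=
            Finset.sum_le_sum fun l hl => key' l (le_of_lt (Finset.mem_range.1 hl))
        _ = (lam0 ^ (k - 1))⁻¹ * ∑ l ∈ Finset.range r, ∫ x in U, |dh l x| :=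
            (Finset.mul_sum _ _ _).symm
    have h2 : (∫ x in U, |L (k + r) (dh r) x|)
        ≤ (lam0 ^ (k + r - 1))⁻¹ * ∑ l ∈ Finset.range (r + 1), ∫ x in U, |dh l x| := by
      refine le_trans (key r le_rfl) (mul_le_mul_of_nonneg_left ?_
        (inv_nonneg.2 (pow_nonneg hlam0pos.le _)))
      exact Finset.single_le_sum (f := fun l => ∫ x in U, |dh l x|)
        (fun l _ => ha l) (Finset.self_mem_range_succ r)
    linarith
end

section
/- For the transfer operator 𝓛_0 of a piecewise affine expanding Markov map (with derivative bounded in absolute value by Γ_0 = ‖f'‖_∞) acting on W^{r,1}, r ≥ 1: ‖𝓛_0 h‖_r ≤ Γ_0 ‖h‖_r and ‖𝓛_0 h‖_r ≤ λ^{-(r-1)} ‖h‖_r + Γ_0 ‖h‖_{r-1}. -/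
open Set MeasureTheory

/-- Key estimate: `∫_U |∑_j c_j A_{j,idx x} φ(g_j x)| ≤ ∑_j c_j (λ_j ∫_{I_j} |φ|)`. -/
lemma aux_key
    {N : ℕ} {I : Fin N → Set ℝ}
    (hIopen : ∀ j, ∃ a b : ℝ, a < b ∧ I j = Set.Ioo a b)
    {lam : Fin N → ℝ} (hlampos : ∀ j, 0 < lam j)
    {A : Fin N → Fin N → ℝ} (hA01 : ∀ i j, A i j = 0 ∨ A i j = 1)
    {g : Fin N → ℝ → ℝ}
    (hg : ∀ j x, HasDerivAt (g j) (lam j)⁻¹ x)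
    (hgI : ∀ i j, A j i = 1 → ∀ x ∈ I i, g j x ∈ I j)
    {idx : ℝ → Fin N} (hidx : ∀ j, ∀ x ∈ I j, idx x = j)
    {U : Set ℝ} (hU : U = ⋃ j, I j)
    (φ : ℝ → ℝ) (hφ : IntegrableOn φ U)
    (c : Fin N → ℝ) (hc : ∀ j, 0 ≤ c j) :
    ∫ x in U, |∑ j, c j * A j (idx x) * φ (g j x)|
      ≤ ∑ j, c j * (lam j * ∫ x in I j, |φ x|) := by
  have hmeasI : ∀ j, MeasurableSet (I j) := by
    intro j; obtain ⟨a, b, hab, hI⟩ := hIopen j; rw [hI]; exact measurableSet_Ioo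
  have hIU : ∀ j, I j ⊆ U := fun j => hU ▸ Set.subset_iUnion I j
  have hdisj : Pairwise (Function.onFun Disjoint I) := by
    intro i j hij
    rw [Function.onFun, Set.disjoint_left]
    intro x hxi hxj
    exact hij ((hidx i x hxi).symm.trans (hidx j x hxj))
  have hAnn : ∀ i j, 0 ≤ A i j := by
    intro i j; rcases hA01 i j with h | h <;> rw [h] <;> norm_num
  -- affine form of g
  have hgform : ∀ j x, g j x = (lam j)⁻¹ * x + g j 0 := by
    intro j x
    have hker : ∀ y : ℝ, HasDerivAt (fun t => g j t - (lam j)⁻¹ * t) 0 y := by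
      intro y
      have h1 : HasDerivAt (fun t : ℝ => (lam j)⁻¹ * t) ((lam j)⁻¹) y := by
        simpa using (hasDerivAt_id y).const_mul ((lam j)⁻¹)
      simpa using (hg j y).fun_sub h1
    have := is_const_of_deriv_eq_zero (fun y => (hker y).differentiableAt)
      (fun y => (hker y).deriv) x 0
    simp only [mul_zero, sub_zero] at this
    linarith
  have hginj : ∀ j, Function.Injective (g j) := by
    intro j x y hxy
    rw [hgform j x, hgform j y] at hxy
    have hk : (lam j)⁻¹ ≠ 0 := inv_ne_zero (hlampos j).ne'
    exact mul_left_cancel₀ hk (by linarith)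
  -- change of variables on each branch
  have key : ∀ j i, A j i = 1 →
      IntegrableOn (fun x => |φ (g j x)|) (I i) ∧
      (∫ x in I i, |φ (g j x)|) = lam j * ∫ y in g j '' I i, |φ y| ∧
      MeasurableSet (g j '' I i) ∧ g j '' I i ⊆ I j := by
    intro j i hA
    obtain ⟨a, b, hab, hIi⟩ := hIopen i
    set k := (lam j)⁻¹ with hkdef
    have hk : 0 < k := inv_pos.mpr (hlampos j)
    have hsub : g j '' I i ⊆ I j := by
      rintro y ⟨x, hx, rfl⟩; exact hgI i j hA x hx
    have himg : g j '' I i = Ioo (g j a) (g j b) := by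
      rw [hIi, Set.image_congr' (fun x => hgform j x), Set.image_affine_Ioo hk,
        ← hgform j a, ← hgform j b]
    have hga : g j a < g j b := by
      rw [hgform j a, hgform j b]
      have := mul_lt_mul_of_pos_left hab hk
      linarith
    -- integrability of |φ| on the image interval
    have hφj : IntegrableOn (fun y => |φ y|) (Ioo (g j a) (g j b)) := by
      refine (hφ.mono_set ?_).abs
      rw [← himg]; exact hsub.trans (hIU j)
    have hii : IntervalIntegrable (fun y => |φ y|) volume (g j a) (g j b) := by
      rw [intervalIntegrable_iff_integrableOn_Ioo_of_le hga.le]; exact hφj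
    -- transport integrability through the affine map
    have h2 := (hii.comp_add_right (g j 0)).comp_mul_left (c := k)
    have hlne : lam j ≠ 0 := (hlampos j).ne'
    have ea : (g j a - g j 0) / k = a := by
      rw [hgform j a, hkdef]; field_simp; ring
    have eb : (g j b - g j 0) / k = b := by
      rw [hgform j b, hkdef]; field_simp; ring
    rw [ea, eb, intervalIntegrable_iff_integrableOn_Ioo_of_le hab.le] at h2
    have hcomp : IntegrableOn (fun x => |φ (g j x)|) (I i) := by
      rw [hIi]
      exact h2.congr_fun (fun x _ => by rw [hgform j x]) measurableSet_Ioo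
    refine ⟨hcomp, ?_, by rw [himg]; exact measurableSet_Ioo, hsub⟩
    -- the change of variables formula
    have hkne : k ≠ 0 := hk.ne'
    calc ∫ x in I i, |φ (g j x)|
        = ∫ x in Ioo a b, |φ (k * x + g j 0)| := by
          rw [hIi]
          exact setIntegral_congr_fun measurableSet_Ioo (fun x _ => by rw [hgform j x])
      _ = ∫ x in a..b, |φ (k * x + g j 0)| := by
          rw [intervalIntegral.integral_of_le hab.le, integral_Ioc_eq_integral_Ioo]
      _ = k⁻¹ • ∫ y in (k * a + g j 0)..(k * b + g j 0), |φ y| := by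
          rw [intervalIntegral.integral_comp_mul_add (fun y => |φ y|) hkne (g j 0)]
      _ = lam j * ∫ y in g j '' I i, |φ y| := by
          rw [hkdef, ← hgform j a, ← hgform j b,
            intervalIntegral.integral_of_le hga.le, integral_Ioc_eq_integral_Ioo,
            himg, smul_eq_mul, inv_inv]
  -- per-branch summed estimate
  have branch : ∀ j, ∑ i, A j i * ∫ x in I i, |φ (g j x)| ≤ lam j * ∫ x in I j, |φ x| := by
    intro j
    classical
    set T : Finset (Fin N) := Finset.univ.filter (fun i => A j i = 1) with hT
    have hstep1 : ∑ i, A j i * ∫ x in I i, |φ (g j x)|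
        = ∑ i ∈ T, ∫ x in I i, |φ (g j x)| := by
      rw [Finset.sum_filter]
      refine Finset.sum_congr rfl (fun i _ => ?_)
      rcases hA01 j i with h | h <;> simp [h]
    have hstep2 : ∑ i ∈ T, ∫ x in I i, |φ (g j x)|
        = lam j * ∑ i ∈ T, ∫ y in g j '' I i, |φ y| := by
      rw [Finset.mul_sum]
      refine Finset.sum_congr rfl (fun i hi => ?_)
      have hAi : A j i = 1 := by
        simp only [hT, Finset.mem_filter] at hi; exact hi.2
      exact (key j i hAi).2.1
    have hφIj : IntegrableOn (fun y => |φ y|) (I j) := (hφ.mono_set (hIU j)).abs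
    have hstep3 : ∑ i ∈ T, ∫ y in g j '' I i, |φ y|
        = ∫ y in ⋃ i ∈ T, g j '' I i, |φ y| := by
      refine (integral_biUnion_finset T (fun i hi => ?_) ?_ (fun i hi => ?_)).symm
      · have hAi : A j i = 1 := by
          simp only [hT, Finset.mem_filter] at hi; exact hi.2
        exact (key j i hAi).2.2.1
      · intro i hi i' hi' hne
        exact Set.disjoint_image_of_injective (hginj j) (hdisj hne)
      · have hAi : A j i = 1 := by
          simp only [hT, Finset.mem_filter] at hi; exact hi.2
        exact hφIj.mono_set (key j i hAi).2.2.2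
    have hstep4 : ∫ y in ⋃ i ∈ T, g j '' I i, |φ y| ≤ ∫ y in I j, |φ y| := by
      have hsub2 : (⋃ i ∈ T, g j '' I i) ⊆ I j := by
        refine Set.iUnion₂_subset (fun i hi => ?_)
        have hAi : A j i = 1 := by
          simp only [hT, Finset.mem_filter] at hi; exact hi.2
        exact (key j i hAi).2.2.2
      exact setIntegral_mono_set hφIj
        (Filter.Eventually.of_forall (fun y => abs_nonneg _))
        (HasSubset.Subset.eventuallyLE hsub2)
    rw [hstep1, hstep2]
    exact mul_le_mul_of_nonneg_left (hstep3 ▸ hstep4) (hlampos j).le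
  -- the majorant F
  set F : ℝ → ℝ := fun x => ∑ j, c j * A j (idx x) * |φ (g j x)| with hF
  have hFle : ∀ x, |∑ j, c j * A j (idx x) * φ (g j x)| ≤ F x := by
    intro x
    refine (Finset.abs_sum_le_sum_abs _ _).trans (le_of_eq ?_)
    refine Finset.sum_congr rfl (fun j _ => ?_)
    rw [abs_mul, abs_mul, abs_of_nonneg (hc j), abs_of_nonneg (hAnn j (idx x))]
  -- integrability of each summand on each piece
  have hsumint : ∀ i j, IntegrableOn (fun x => c j * A j i * |φ (g j x)|) (I i) := by
    intro i j
    rcases hA01 j i with h | h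
    · have : (fun x => c j * A j i * |φ (g j x)|) = fun _ => (0:ℝ) := by
        funext x; rw [h]; ring
      rw [this]; exact (integrableOn_const_iff).mpr (Or.inl (by simp))
    · rw [h]
      exact IntegrableOn.congr_fun ((key j i h).1.const_mul (c j))
        (fun x _ => by ring) (hmeasI i)
  have hFintI : ∀ i, IntegrableOn F (I i) := by
    intro i
    have : IntegrableOn (fun x => ∑ j, c j * A j i * |φ (g j x)|) (I i) :=
      integrable_finset_sum _ (fun j _ => hsumint i j)
    exact this.congr_fun (fun x hx => by simp only [hF, hidx i x hx]) (hmeasI i)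
  have hFint : IntegrableOn F U := by
    rw [hU, ← Set.biUnion_univ, ← Finset.coe_univ, Finset.set_biUnion_coe]
    exact integrableOn_finset_iUnion.mpr (fun i _ => hFintI i)
  -- put everything together
  calc ∫ x in U, |∑ j, c j * A j (idx x) * φ (g j x)|
      ≤ ∫ x in U, F x :=
        integral_mono_of_nonneg (Filter.Eventually.of_forall (fun x => abs_nonneg _))
          hFint (Filter.Eventually.of_forall hFle)
    _ = ∑ i, ∫ x in I i, F x := by
        rw [hU]
        exact integral_iUnion_fintype hmeasI hdisj (fun i => hFintI i)
    _ = ∑ i, ∑ j, c j * A j i * ∫ x in I i, |φ (g j x)| := by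
        refine Finset.sum_congr rfl (fun i _ => ?_)
        rw [show (∫ x in I i, F x)
            = ∫ x in I i, ∑ j, c j * A j i * |φ (g j x)| from
          setIntegral_congr_fun (hmeasI i)
            (fun x hx => by simp only [hF, hidx i x hx]),
          integral_finset_sum _ (fun j _ => hsumint i j)]
        refine Finset.sum_congr rfl (fun j _ => ?_)
        rw [MeasureTheory.integral_const_mul]
    _ = ∑ j, c j * ∑ i, A j i * ∫ x in I i, |φ (g j x)| := by
        rw [Finset.sum_comm]
        refine Finset.sum_congr rfl (fun j _ => ?_)
        rw [Finset.mul_sum]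
        refine Finset.sum_congr rfl (fun i _ => ?_)
        ring
    _ ≤ ∑ j, c j * (lam j * ∫ x in I j, |φ x|) :=
        Finset.sum_le_sum (fun j _ =>
          mul_le_mul_of_nonneg_left (branch j) (hc j))

/-- Lasota–Yorke inequalities for `𝓛_0` acting on `W^{r,1}`, `r ≥ 1`, with
`Γ₀ = ‖f'‖_∞` (an upper bound for the branch slopes):
`‖𝓛_0 h‖_r ≤ Γ₀ ‖h‖_r` and `‖𝓛_0 h‖_r ≤ λ^{-(r-1)} ‖h‖_r + Γ₀ ‖h‖_{r-1}`.
The `W^{r,1}` norm of `𝓛_0 h` is expressed via its piecewise derivatives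
`(𝓛_0 h)^{(l)} = 𝓛_l h^{(l)}`. -/
theorem stmt2
    (N : ℕ) (I : Fin N → Set ℝ)
    (hIopen : ∀ j, ∃ a b : ℝ, a < b ∧ I j = Set.Ioo a b)
    (lam : Fin N → ℝ) (lam0 : ℝ) (hlam0 : 1 < lam0)
    (hlam : ∀ j, lam0 ≤ lam j)
    (Γ0 : ℝ) (hΓ0 : ∀ j, lam j ≤ Γ0)
    (A : Fin N → Fin N → ℝ) (hA01 : ∀ i j, A i j = 0 ∨ A i j = 1)
    (g : Fin N → ℝ → ℝ)
    (hg : ∀ j x, HasDerivAt (g j) (lam j)⁻¹ x)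
    (hgI : ∀ i j, A j i = 1 → ∀ x ∈ I i, g j x ∈ I j)
    (idx : ℝ → Fin N) (hidx : ∀ j, ∀ x ∈ I j, idx x = j)
    (L : ℕ → (ℝ → ℝ) → (ℝ → ℝ))
    (hL : ∀ m φ x, L m φ x = ∑ j, (lam j) ^ (-(m : ℤ)) * A j (idx x) * φ (g j x))
    (r : ℕ) (hr : 1 ≤ r) (h : ℝ → ℝ)
    (dh : ℕ → ℝ → ℝ) (hdh0 : dh 0 = h)
    (hdh : ∀ l < r, ∀ j, ∀ x ∈ I j, HasDerivAt (dh l) (dh (l + 1) x) x)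
    (U : Set ℝ) (hU : U = ⋃ j, I j)
    (hint : ∀ l ≤ r, IntegrableOn (dh l) U) :
    (∑ l ∈ Finset.range (r + 1), ∫ x in U, |L l (dh l) x|)
        ≤ Γ0 * ∑ l ∈ Finset.range (r + 1), ∫ x in U, |dh l x| ∧
      (∑ l ∈ Finset.range (r + 1), ∫ x in U, |L l (dh l) x|)
        ≤ (lam0 ^ (r - 1))⁻¹ * (∑ l ∈ Finset.range (r + 1), ∫ x in U, |dh l x|)
          + Γ0 * (∑ l ∈ Finset.range r, ∫ x in U, |dh l x|) := by
  have hlampos : ∀ j, 0 < lam j := fun j => lt_of_lt_of_le (lt_trans one_pos hlam0) (hlam j)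
  have hmeasI : ∀ j, MeasurableSet (I j) := by
    intro j; obtain ⟨a, b, hab, hI⟩ := hIopen j; rw [hI]; exact measurableSet_Ioo
  have hdisj : Pairwise (Function.onFun Disjoint I) := by
    intro i j hij
    rw [Function.onFun, Set.disjoint_left]
    intro x hxi hxj
    exact hij ((hidx i x hxi).symm.trans (hidx j x hxj))
  have hIU : ∀ j, I j ⊆ U := fun j => hU ▸ Set.subset_iUnion I j
  -- the L-integrals bounded in terms of branch coefficients
  have hmain : ∀ l ≤ r, ∫ x in U, |L l (dh l) x|
      ≤ ∑ j, (lam j) ^ (-(l : ℤ)) * (lam j * ∫ x in I j, |dh l x|) := by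
    intro l hl
    have := aux_key hIopen hlampos hA01 hg hgI hidx hU (dh l) (hint l hl)
      (fun j => (lam j) ^ (-(l : ℤ))) (fun j => zpow_nonneg (hlampos j).le _)
    calc ∫ x in U, |L l (dh l) x|
        = ∫ x in U, |∑ j, (lam j) ^ (-(l:ℤ)) * A j (idx x) * dh l (g j x)| := by
          refine setIntegral_congr_fun ?_ (fun x _ => by rw [hL]) <;>
            · rw [hU]; exact MeasurableSet.iUnion (fun j => hmeasI j)
      _ ≤ _ := this
  -- splitting of ∫_U |dh l| as a sum over pieces
  have hsplit : ∀ l ≤ r, ∫ x in U, |dh l x| = ∑ j, ∫ x in I j, |dh l x| := by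
    intro l hl
    rw [hU]
    exact integral_iUnion_fintype hmeasI hdisj
      (fun j => ((hint l hl).mono_set (hIU j)).abs)
  have hTnn : ∀ l j, 0 ≤ ∫ x in I j, |dh l x| :=
    fun l j => setIntegral_nonneg (hmeasI j) (fun x _ => abs_nonneg _)
  have hUnn : ∀ l, 0 ≤ ∫ x in U, |dh l x| := by
    intro l
    exact setIntegral_nonneg (by rw [hU]; exact MeasurableSet.iUnion hmeasI)
      (fun x _ => abs_nonneg _)
  -- coefficient bounds
  have hcoefΓ : ∀ (l : ℕ) (j : Fin N), (lam j) ^ (-(l : ℤ)) * lam j ≤ Γ0 := by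
    intro l j
    have h1 : (lam j) ^ (-(l : ℤ)) ≤ 1 := by
      apply zpow_le_one_of_nonpos₀
      · exact le_trans hlam0.le (hlam j)
      · exact neg_nonpos.mpr (Int.ofNat_nonneg l)
    calc (lam j) ^ (-(l : ℤ)) * lam j ≤ 1 * lam j :=
          mul_le_mul_of_nonneg_right h1 (hlampos j).le
      _ = lam j := one_mul _
      _ ≤ Γ0 := hΓ0 j
  have hΓpos : ∀ j, (0:ℝ) < Γ0 := fun j => lt_of_lt_of_le (hlampos j) (hΓ0 j)
  -- bound for each l with Γ0
  have hboundΓ : ∀ l ≤ r, ∫ x in U, |L l (dh l) x| ≤ Γ0 * ∫ x in U, |dh l x| := by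
    intro l hl
    refine (hmain l hl).trans ?_
    rw [hsplit l hl, Finset.mul_sum]
    refine Finset.sum_le_sum (fun j _ => ?_)
    rw [← mul_assoc]
    exact mul_le_mul_of_nonneg_right (hcoefΓ l j) (hTnn l j)
  -- bound for l = r with lam0
  have hcoefr : ∀ j, (lam j) ^ (-(r : ℤ)) * lam j ≤ (lam0 ^ (r - 1))⁻¹ := by
    intro j
    have h1 : (lam j) ^ (-(r : ℤ)) * lam j = ((lam j) ^ (r - 1))⁻¹ := by
      have : (lam j) ^ (-(r : ℤ)) * lam j = (lam j) ^ (-(r:ℤ) + 1) := by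
        rw [zpow_add₀ (hlampos j).ne']; simp
      rw [this, ← zpow_natCast (lam j) (r - 1), ← zpow_neg]
      congr 1
      omega
    rw [h1]
    have h2 : lam0 ^ (r-1) ≤ (lam j) ^ (r-1) :=
      pow_le_pow_left₀ (by positivity) (hlam j) _
    have h3 : (0:ℝ) < lam0 ^ (r-1) := by positivity
    exact inv_anti₀ h3 h2
  have hboundr : ∫ x in U, |L r (dh r) x| ≤ (lam0 ^ (r - 1))⁻¹ * ∫ x in U, |dh r x| := by
    refine (hmain r le_rfl).trans ?_
    rw [hsplit r le_rfl, Finset.mul_sum]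
    refine Finset.sum_le_sum (fun j _ => ?_)
    rw [← mul_assoc]
    exact mul_le_mul_of_nonneg_right (hcoefr j) (hTnn r j)
  constructor
  · rw [Finset.mul_sum]
    refine Finset.sum_le_sum (fun l hl => ?_)
    exact hboundΓ l (Nat.lt_succ_iff.mp (Finset.mem_range.mp hl))
  · have hsum1 : (∑ l ∈ Finset.range (r + 1), ∫ x in U, |L l (dh l) x|)
        ≤ (∑ l ∈ Finset.range r, Γ0 * ∫ x in U, |dh l x|)
          + (lam0 ^ (r - 1))⁻¹ * ∫ x in U, |dh r x| := by
      rw [Finset.sum_range_succ]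
      exact add_le_add (Finset.sum_le_sum (fun l hl =>
        hboundΓ l (by simp at hl; omega))) hboundr
    refine hsum1.trans ?_
    rw [Finset.sum_range_succ, ← Finset.mul_sum]
    have hinv : (0:ℝ) ≤ (lam0 ^ (r - 1))⁻¹ := by positivity
    have h4 : (0:ℝ) ≤ ∑ l ∈ Finset.range r, ∫ x in U, |dh l x| :=
      Finset.sum_nonneg (fun l _ => hUnn l)
    nlinarith [mul_nonneg hinv h4]
end

section
/- Let f be a C² full branch expanding map of [0,1] with f' ≥ λ > 1 which is an N-covering (N branches). Then the transfer operator 𝓛₀ h = Σ_{y∈f^{-1}(x)} h(y), acting on C¹([0,1]), has spectrum contained in {N} ∪ {z ∈ ℂ : |z| ≤ 1}. Moreover any eigenfunction of 𝓛₀ in C¹ with eigenvalue ν, |ν| > 1, is constant, hence ν = N. -/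
open Set

/-- For a `C²` full branch expanding `N`-covering map `f` of `[0,1]`
(`f' ≥ λ > 1`), any `C¹` eigenfunction of `𝓛₀ h(x) = Σ_{y∈f⁻¹(x)} h(y)` with eigenvalue `ν`,
`|ν| > 1`, is constant, and then `ν = N`; hence the spectrum of `𝓛₀` on `C¹` outside the closed
unit disk reduces to `{N}`. -/
theorem stmt7
    (N : ℕ) (hN : 0 < N) (p : Fin (N + 1) → ℝ) (hp : StrictMono p)
    (hp0 : p 0 = 0) (hpN : p (Fin.last N) = 1)
    (f fd : ℝ → ℝ) (lam0 : ℝ) (hlam0 : 1 < lam0)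
    (hfd : ∀ j : Fin N, ∀ x ∈ Set.Ioo (p j.castSucc) (p j.succ), HasDerivAt f (fd x) x)
    (hfdc : ∀ j : Fin N, ContinuousOn fd (Set.Ioo (p j.castSucc) (p j.succ)))
    (hexp : ∀ j : Fin N, ∀ x ∈ Set.Ioo (p j.castSucc) (p j.succ), lam0 ≤ fd x)
    (g : Fin N → ℝ → ℝ)
    (hgmem : ∀ j : Fin N, ∀ x ∈ Set.Ioo (0:ℝ) 1, g j x ∈ Set.Ioo (p j.castSucc) (p j.succ))
    (hgf : ∀ j : Fin N, ∀ x ∈ Set.Ioo (0:ℝ) 1, f (g j x) = x)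
    (hgd : ∀ j : Fin N, ∀ x ∈ Set.Ioo (0:ℝ) 1, HasDerivAt (g j) (((fd (g j x) : ℝ) : ℝ))⁻¹ x)
    (L0 : (ℝ → ℂ) → ℝ → ℂ)
    (hL0 : ∀ φ x, L0 φ x = ∑ j, φ (g j x))
    (ν : ℂ) (hν : 1 < ‖ν‖)
    (h h' : ℝ → ℂ)
    (hh : ∀ x, HasDerivAt h (h' x) x) (hh' : Continuous h')
    (heig : ∀ x ∈ Set.Ioo (0:ℝ) 1, L0 h x = ν * h x)
    (hne : ∃ x ∈ Set.Icc (0:ℝ) 1, h x ≠ 0) :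
    (∀ x ∈ Set.Icc (0:ℝ) 1, ∀ y ∈ Set.Icc (0:ℝ) 1, h x = h y) ∧ ν = (N : ℂ) := by
  have hpm := hp.monotone
  set ψ : ℝ → ℝ := fun y => ‖h' y‖ with hψdef
  have hψ : Continuous ψ := hh'.norm
  set φ : Fin N → ℝ → ℝ := fun j x => (fd (g j x))⁻¹ with hφdef
  -- branch intervals sit inside [0,1]
  have hsub : ∀ j : Fin N, Set.Ioo (p j.castSucc) (p j.succ) ⊆ Set.Icc (0:ℝ) 1 := by
    intro j x hx
    have h1 : p 0 ≤ p j.castSucc := hpm (Fin.zero_le _)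
    have h2 : p j.succ ≤ p (Fin.last N) := hpm (Fin.le_last _)
    rw [hp0] at h1; rw [hpN] at h2
    exact ⟨h1.trans hx.1.le, hx.2.le.trans h2⟩
  have hfdpos : ∀ j : Fin N, ∀ x ∈ Set.Ioo (0:ℝ) 1, 0 < fd (g j x) := fun j x hx =>
    lt_of_lt_of_le (lt_trans one_pos hlam0) (hexp j _ (hgmem j x hx))
  have hφpos : ∀ j : Fin N, ∀ x ∈ Set.Ioo (0:ℝ) 1, 0 < φ j x := fun j x hx =>
    inv_pos.mpr (hfdpos j x hx)
  have gcont : ∀ j : Fin N, ContinuousOn (g j) (Set.Ioo (0:ℝ) 1) := fun j x hx =>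
    (hgd j x hx).continuousAt.continuousWithinAt
  have hφcont : ∀ j : Fin N, ContinuousOn (φ j) (Set.Ioo (0:ℝ) 1) := by
    intro j
    exact ContinuousOn.inv₀ ((hfdc j).comp (gcont j) (fun x hx => hgmem j x hx))
      (fun x hx => (hfdpos j x hx).ne')
  -- derivative identity
  have hkey : ∀ x ∈ Set.Ioo (0:ℝ) 1,
      ν * h' x = ∑ j, (φ j x) • h' (g j x) := by
    intro x hx
    have h2 : HasDerivAt (fun y => ∑ j, h (g j y)) (∑ j, (φ j x) • h' (g j x)) x := by
      apply HasDerivAt.fun_sum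
      intro j _
      exact HasDerivAt.scomp x (hh (g j x)) (hgd j x hx)
    have heq : (fun y => ν * h y) =ᶠ[nhds x] (fun y => ∑ j, h (g j y)) :=
      Filter.eventuallyEq_of_mem (isOpen_Ioo.mem_nhds hx)
        (fun y hy => by simp only [← heig y hy, hL0])
    have h3 : HasDerivAt (fun y => ν * h y) (∑ j, (φ j x) • h' (g j x)) x :=
      h2.congr_of_eventuallyEq heq
    exact ((hh x).const_mul ν).unique h3
  -- pointwise norm inequality
  have hnorm : ∀ x ∈ Set.Ioo (0:ℝ) 1,
      ‖ν‖ * ψ x ≤ ∑ j, φ j x * ψ (g j x) := by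
    intro x hx
    have hthis := congrArg norm (hkey x hx)
    rw [norm_mul] at hthis
    calc ‖ν‖ * ψ x = ‖∑ j, (φ j x) • h' (g j x)‖ := by
          rw [← hthis]
      _ ≤ ∑ j, ‖(φ j x) • h' (g j x)‖ := norm_sum_le _ _
      _ = ∑ j, φ j x * ψ (g j x) := by
          refine Finset.sum_congr rfl fun j _ => ?_
          rw [norm_smul, Real.norm_eq_abs, abs_of_pos (hφpos j x hx)]
  -- telescoping sum of integrals over branch intervals
  have htel : ∑ j : Fin N, ∫ x in (p j.castSucc)..(p j.succ), ψ x
      = ∫ x in (0:ℝ)..1, ψ x := by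
    set q : ℕ → ℝ := fun k => if hk : k < N + 1 then p ⟨k, hk⟩ else 1 with hq
    have hq1 : ∀ j : Fin N, q j.val = p j.castSucc := by
      intro j
      have hj : j.val < N + 1 := Nat.lt_succ_of_lt j.isLt
      simp only [hq, dif_pos hj]
      congr 1
    have hq2 : ∀ j : Fin N, q (j.val + 1) = p j.succ := by
      intro j
      have hj : j.val + 1 < N + 1 := Nat.succ_lt_succ j.isLt
      simp only [hq, dif_pos hj]
      congr 1
    have hq0 : q 0 = 0 := by
      simp only [hq, dif_pos (Nat.succ_pos N)]
      rw [← hp0]; congr 1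
    have hqN : q N = 1 := by
      simp only [hq, dif_pos (Nat.lt_succ_self N)]
      rw [← hpN]; congr 1
    have hsum := intervalIntegral.sum_integral_adjacent_intervals
      (f := ψ) (μ := MeasureTheory.volume) (a := q) (n := N)
      (fun k _ => hψ.intervalIntegrable _ _)
    rw [hq0, hqN] at hsum
    rw [← hsum, ← Fin.sum_univ_eq_sum_range (fun k => ∫ x in (q k)..(q (k+1)), ψ x) N]
    refine Finset.sum_congr rfl fun j _ => ?_
    rw [hq1 j, hq2 j]
  -- main inequality
  have hmain : ∀ a b : ℝ, 0 < a → a < b → b < 1 →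
      ‖ν‖ * ∫ x in a..b, ψ x ≤ ∫ x in (0:ℝ)..1, ψ x := by
    intro a b ha hab hb1
    have hIcc : Set.Icc a b ⊆ Set.Ioo (0:ℝ) 1 := fun x hx =>
      ⟨ha.trans_le hx.1, lt_of_le_of_lt hx.2 hb1⟩
    have huIcc : Set.uIcc a b = Set.Icc a b := Set.uIcc_of_le hab.le
    have haIoo : a ∈ Set.Ioo (0:ℝ) 1 := ⟨ha, hab.trans hb1⟩
    have hbIoo : b ∈ Set.Ioo (0:ℝ) 1 := ⟨ha.trans hab, hb1⟩
    have hcont : ∀ j : Fin N, ContinuousOn (fun x => φ j x * ψ (g j x)) (Set.Icc a b) :=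
      fun j => ((hφcont j).mono hIcc).mul (hψ.comp_continuousOn ((gcont j).mono hIcc))
    have hint : ∀ j : Fin N,
        IntervalIntegrable (fun x => φ j x * ψ (g j x)) MeasureTheory.volume a b := by
      intro j
      apply ContinuousOn.intervalIntegrable
      rw [huIcc]; exact hcont j
    have step1 : ‖ν‖ * ∫ x in a..b, ψ x
        ≤ ∫ x in a..b, ∑ j, φ j x * ψ (g j x) := by
      rw [← intervalIntegral.integral_const_mul]
      apply intervalIntegral.integral_mono_on hab.le
      · exact ((continuous_const.mul hψ).intervalIntegrable _ _)
      · apply ContinuousOn.intervalIntegrable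
        rw [huIcc]
        exact continuousOn_finset_sum _ (fun j _ => hcont j)
      · intro x hx; exact hnorm x (hIcc hx)
    have step2 : (∫ x in a..b, ∑ j, φ j x * ψ (g j x))
        = ∑ j, ∫ x in a..b, φ j x * ψ (g j x) :=
      intervalIntegral.integral_finset_sum (fun j _ => hint j)
    have hmono : ∀ j : Fin N, g j a ≤ g j b := by
      intro j
      have hsm : StrictMonoOn (g j) (Set.Icc a b) := by
        apply strictMonoOn_of_deriv_pos (convex_Icc a b) ((gcont j).mono hIcc)
        intro x hx
        rw [interior_Icc] at hx
        have hx' : x ∈ Set.Ioo (0:ℝ) 1 := hIcc (Set.Ioo_subset_Icc_self hx)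
        rw [(hgd j x hx').deriv]
        exact inv_pos.mpr (hfdpos j x hx')
      exact (hsm (Set.left_mem_Icc.mpr hab.le) (Set.right_mem_Icc.mpr hab.le) hab).le
    have step3 : ∀ j : Fin N, (∫ x in a..b, φ j x * ψ (g j x))
        ≤ ∫ x in (p j.castSucc)..(p j.succ), ψ x := by
      intro j
      have hcv := intervalIntegral.integral_comp_smul_deriv (f := g j) (f' := φ j) (g := ψ)
        (fun x hx => hgd j x (hIcc (huIcc ▸ hx)))
        (by rw [huIcc]; exact (hφcont j).mono hIcc) hψ
      have hcv' : (∫ x in a..b, φ j x * ψ (g j x)) = ∫ u in (g j a)..(g j b), ψ u := by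
        rw [← hcv]; rfl
      rw [hcv']
      exact intervalIntegral.integral_mono_interval (hgmem j a haIoo).1.le (hmono j)
        (hgmem j b hbIoo).2.le
        (Filter.Eventually.of_forall fun x => norm_nonneg _) (hψ.intervalIntegrable _ _)
    calc ‖ν‖ * ∫ x in a..b, ψ x
        ≤ ∫ x in a..b, ∑ j, φ j x * ψ (g j x) := step1
      _ = ∑ j, ∫ x in a..b, φ j x * ψ (g j x) := step2
      _ ≤ ∑ j : Fin N, ∫ x in (p j.castSucc)..(p j.succ), ψ x :=
          Finset.sum_le_sum (fun j _ => step3 j)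
      _ = ∫ x in (0:ℝ)..1, ψ x := htel
  -- bound on ψ
  obtain ⟨x₀, hx₀mem, hx₀max⟩ := isCompact_Icc.exists_isMaxOn
    (Set.nonempty_Icc.mpr zero_le_one) (hψ.continuousOn (s := Set.Icc (0:ℝ) 1))
  set M : ℝ := ψ x₀ with hMdef
  have hM0 : 0 ≤ M := norm_nonneg _
  have hMb : ∀ x ∈ Set.Icc (0:ℝ) 1, ψ x ≤ M := fun x hx => hx₀max hx
  have htail : ∀ u v : ℝ, 0 ≤ u → u ≤ v → v ≤ 1 → (∫ x in u..v, ψ x) ≤ M * (v - u) := by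
    intro u v hu huv hv
    calc (∫ x in u..v, ψ x) ≤ ∫ _x in u..v, M := by
          apply intervalIntegral.integral_mono_on huv (hψ.intervalIntegrable _ _)
            intervalIntegrable_const
          intro x hx; exact hMb x ⟨hu.trans hx.1, hx.2.trans hv⟩
      _ = M * (v - u) := by simp [mul_comm]
  set I : ℝ := ∫ x in (0:ℝ)..1, ψ x with hIdef
  have hI0 : 0 ≤ I := intervalIntegral.integral_nonneg zero_le_one (fun x _ => norm_nonneg _)
  -- key estimate for small ε
  have hkeyε : ∀ ε : ℝ, ε ∈ Set.Ioo (0:ℝ) (1/2) →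
      (‖ν‖ - 1) * I ≤ 2 * ε * M * ‖ν‖ := by
    intro ε hε
    obtain ⟨hε0, hε2⟩ := hε
    have hεb : ε < 1 - ε := by linarith
    have he1 : (∫ x in (0:ℝ)..ε, ψ x) + ∫ x in ε..(1-ε), ψ x
        = ∫ x in (0:ℝ)..(1-ε), ψ x :=
      intervalIntegral.integral_add_adjacent_intervals (hψ.intervalIntegrable _ _)
        (hψ.intervalIntegrable _ _)
    have he2 : (∫ x in (0:ℝ)..(1-ε), ψ x) + ∫ x in (1-ε)..1, ψ x = I :=
      intervalIntegral.integral_add_adjacent_intervals (hψ.intervalIntegrable _ _)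
        (hψ.intervalIntegrable _ _)
    have ht1 : (∫ x in (0:ℝ)..ε, ψ x) ≤ M * ε := by
      have := htail 0 ε le_rfl hε0.le (by linarith)
      simpa using this
    have ht2 : (∫ x in (1-ε)..1, ψ x) ≤ M * ε := by
      have := htail (1-ε) 1 (by linarith) (by linarith) le_rfl
      simpa using this
    have hA : I ≤ (∫ x in ε..(1-ε), ψ x) + 2 * ε * M := by nlinarith
    have hB : ‖ν‖ * ∫ x in ε..(1-ε), ψ x ≤ I := hmain ε (1-ε) hε0 hεb (by linarith)
    have hC : ‖ν‖ * I ≤ ‖ν‖ * ((∫ x in ε..(1-ε), ψ x) + 2 * ε * M) :=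
      mul_le_mul_of_nonneg_left hA (norm_nonneg ν)
    nlinarith
  -- conclude I = 0
  have hIzero : I = 0 := by
    have hle : (‖ν‖ - 1) * I ≤ 0 := by
      have hts : Filter.Tendsto (fun ε : ℝ => 2 * ε * M * ‖ν‖)
          (nhdsWithin 0 (Set.Ioi 0)) (nhds 0) := by
        have hcont : Continuous (fun ε : ℝ => 2 * ε * M * ‖ν‖) := by fun_prop
        have := (hcont.tendsto 0).mono_left (nhdsWithin_le_nhds (s := Set.Ioi (0:ℝ)))
        simpa using this
      apply ge_of_tendsto hts
      filter_upwards [Ioo_mem_nhdsGT_of_mem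
        (Set.mem_Ico.mpr ⟨le_rfl, (by norm_num : (0:ℝ) < 1/2)⟩)] with ε hε
      exact hkeyε ε hε
    have hpos : 0 < ‖ν‖ - 1 := by linarith
    have : I ≤ 0 := by
      by_contra hcon
      push_neg at hcon
      nlinarith [mul_pos hpos hcon]
    exact le_antisymm this hI0
  -- h' = 0 on (0,1)
  have hψ0 : ∀ x ∈ Set.Ioo (0:ℝ) 1, h' x = 0 := by
    intro x hx
    have hHx : ∀ y ∈ Set.Ioo (0:ℝ) 1, (∫ t in (0:ℝ)..y, ψ t) = 0 := by
      intro y hy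
      have h1 : (∫ t in (0:ℝ)..y, ψ t) ≤ I :=
        intervalIntegral.integral_mono_interval le_rfl hy.1.le hy.2.le
          (Filter.Eventually.of_forall fun t => norm_nonneg _) (hψ.intervalIntegrable _ _)
      have h2 : 0 ≤ ∫ t in (0:ℝ)..y, ψ t :=
        intervalIntegral.integral_nonneg hy.1.le (fun t _ => norm_nonneg _)
      linarith [hIzero ▸ h1]
    have hd1 : HasDerivAt (fun y => ∫ t in (0:ℝ)..y, ψ t) (ψ x) x :=
      intervalIntegral.integral_hasDerivAt_right (hψ.intervalIntegrable _ _)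
        (hψ.stronglyMeasurable.stronglyMeasurableAtFilter) hψ.continuousAt
    have hd2 : HasDerivAt (fun y => ∫ t in (0:ℝ)..y, ψ t) 0 x := by
      have heq : (fun y => ∫ t in (0:ℝ)..y, ψ t) =ᶠ[nhds x] (fun _ => (0:ℝ)) :=
        Filter.eventuallyEq_of_mem (isOpen_Ioo.mem_nhds hx) (fun y hy => hHx y hy)
      exact (hasDerivAt_const x (0:ℝ)).congr_of_eventuallyEq heq
    have : ψ x = 0 := hd1.unique hd2
    simpa [hψdef] using this
  -- h' = 0 on [0,1]
  have hψ0' : Set.EqOn h' (fun _ => 0) (Set.Icc (0:ℝ) 1) := by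
    have hcl := Set.EqOn.closure (fun x hx => hψ0 x hx) hh' continuous_const
    rwa [closure_Ioo (by norm_num : (0:ℝ) ≠ 1)] at hcl
  -- h constant on [0,1]
  have hconst : ∀ x ∈ Set.Icc (0:ℝ) 1, ∀ y ∈ Set.Icc (0:ℝ) 1, h x = h y := by
    intro x hx y hy
    have hle := Convex.norm_image_sub_le_of_norm_hasDerivWithin_le
      (f := h) (f' := h') (s := Set.Icc (0:ℝ) 1) (C := 0)
      (fun z _ => (hh z).hasDerivWithinAt) (fun z hz => by rw [hψ0' hz]; simp)
      (convex_Icc 0 1) hy hx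
    have h0 : ‖h x - h y‖ ≤ 0 := by simpa using hle
    have := le_antisymm h0 (norm_nonneg _)
    rwa [norm_eq_zero, sub_eq_zero] at this
  refine ⟨hconst, ?_⟩
  -- ν = N
  have hhalf : (1/2:ℝ) ∈ Set.Ioo (0:ℝ) 1 := by norm_num
  have hhalf' : (1/2:ℝ) ∈ Set.Icc (0:ℝ) 1 := by norm_num
  have hc : ∀ j : Fin N, h (g j (1/2)) = h (1/2) :=
    fun j => hconst _ (hsub j (hgmem j _ hhalf)) _ hhalf'
  have heq2 : ν * h (1/2) = (N : ℂ) * h (1/2) := by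
    rw [← heig _ hhalf, hL0, Finset.sum_congr rfl (fun j _ => hc j)]
    simp [Finset.sum_const, Finset.card_univ, nsmul_eq_mul]
  obtain ⟨x₀', hx₀', hx₀ne⟩ := hne
  have hch : h (1/2) ≠ 0 := by
    have := hconst x₀' hx₀' (1/2) hhalf'
    rwa [← this]
  exact mul_right_cancel₀ hch heq2
end

section
/- Let f be a C² full branch expanding map of [0,1] with f' ≥ λ > 1, and set τ = λ^{-1} + ∫₀¹ |(1/f'(y))'| dy. If ν ∈ ℂ with |ν| > λ^{-1} is an eigenvalue of 𝓛₁ acting on W^{1,1} with eigenfunction of zero mean, then |ν| ≤ τ. In particular σ(𝓛₁) \ {1} ⊆ {z : |z| ≤ τ} modulo the essential spectrum contained in {|z| ≤ λ^{-1}}. -/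
open Set MeasureTheory

set_option maxHeartbeats 2000000 in
/-- For a `C²` full branch expanding map of `[0,1]` with `f' ≥ λ > 1` and
`τ = λ⁻¹ + ∫₀¹ |(1/f')'|`, every eigenvalue `ν` of `𝓛₁` on `W^{1,1}` with `|ν| > λ⁻¹` whose
eigenfunction has zero mean satisfies `|ν| ≤ τ`. -/
theorem stmt9
    (N : ℕ) (hN : 0 < N) (p : Fin (N + 1) → ℝ) (hp : StrictMono p)
    (hp0 : p 0 = 0) (hpN : p (Fin.last N) = 1)
    (f fd : ℝ → ℝ) (lam0 : ℝ) (hlam0 : 1 < lam0)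
    (hfd : ∀ j : Fin N, ∀ x ∈ Set.Ioo (p j.castSucc) (p j.succ), HasDerivAt f (fd x) x)
    (hexp : ∀ j : Fin N, ∀ x ∈ Set.Ioo (p j.castSucc) (p j.succ), lam0 ≤ fd x)
    (Df : ℝ → ℝ)
    (hDf : ∀ j : Fin N, ∀ x ∈ Set.Ioo (p j.castSucc) (p j.succ),
      HasDerivAt (fun y => (fd y)⁻¹) (Df x) x)
    (hDfint : IntegrableOn Df (Set.Ioo 0 1))
    (g : Fin N → ℝ → ℝ)
    (hgmem : ∀ j : Fin N, ∀ x ∈ Set.Ioo (0:ℝ) 1, g j x ∈ Set.Ioo (p j.castSucc) (p j.succ))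
    (hgf : ∀ j : Fin N, ∀ x ∈ Set.Ioo (0:ℝ) 1, f (g j x) = x)
    (hgd : ∀ j : Fin N, ∀ x ∈ Set.Ioo (0:ℝ) 1, HasDerivAt (g j) ((fd (g j x))⁻¹) x)
    (L1 : (ℝ → ℂ) → ℝ → ℂ)
    (hL1 : ∀ φ x, L1 φ x = ∑ j, φ (g j x) * ((fd (g j x) : ℂ))⁻¹)
    (τ : ℝ) (hτ : τ = lam0⁻¹ + ∫ y in (0:ℝ)..1, |Df y|)
    (ν : ℂ) (hν : lam0⁻¹ < ‖ν‖)
    (h h' : ℝ → ℂ) (hC : ContinuousOn h (Set.Icc 0 1))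
    (hh : ∀ x ∈ Set.Ioo (0:ℝ) 1, HasDerivAt h (h' x) x)
    (hh'int : IntegrableOn h' (Set.Ioo 0 1))
    (hmean : (∫ x in (0:ℝ)..1, h x) = 0)
    (hne : ∃ x ∈ Set.Icc (0:ℝ) 1, h x ≠ 0)
    (heig : ∀ x ∈ Set.Ioo (0:ℝ) 1, L1 h x = ν * h x) :
    ‖ν‖ ≤ τ := by
  classical
  set S : Set ℝ := Set.Ioo (0:ℝ) 1 with hSdef
  have hSm : MeasurableSet S := measurableSet_Ioo
  set I : Fin N → Set ℝ := fun j => Set.Ioo (p j.castSucc) (p j.succ) with hIdef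
  have hIm : ∀ j, MeasurableSet (I j) := fun j => measurableSet_Ioo
  have hIsub : ∀ j, I j ⊆ S := by
    intro j x hx
    refine ⟨lt_of_le_of_lt ?_ hx.1, lt_of_lt_of_le hx.2 ?_⟩
    · rw [← hp0]; exact hp.monotone (Fin.zero_le _)
    · rw [← hpN]; exact hp.monotone (Fin.le_last _)
  have hfdpos : ∀ j, ∀ x ∈ I j, 0 < fd x := fun j x hx =>
    lt_of_lt_of_le (lt_trans one_pos hlam0) (hexp j x hx)
  have hgS : ∀ j, ∀ x ∈ S, g j x ∈ S := fun j x hx => hIsub j (hgmem j x hx)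
  have hwpos : ∀ j, ∀ x ∈ S, 0 < (fd (g j x))⁻¹ := fun j x hx =>
    inv_pos.2 (hfdpos j _ (hgmem j x hx))
  have hwle : ∀ j, ∀ x ∈ S, (fd (g j x))⁻¹ ≤ lam0⁻¹ := fun j x hx =>
    inv_anti₀ (lt_trans one_pos hlam0) (hexp j _ (hgmem j x hx))
  have hginj : ∀ j, InjOn (g j) S := by
    intro j
    have hmono : StrictMonoOn (g j) S := by
      apply strictMonoOn_of_hasDerivWithinAt_pos (convex_Ioo _ _)
        (fun x hx => (hgd j x hx).continuousAt.continuousWithinAt)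
      · intro x hx
        rw [isOpen_Ioo.interior_eq] at hx ⊢
        exact (hgd j x hx).hasDerivWithinAt
      · intro x hx
        rw [isOpen_Ioo.interior_eq] at hx
        exact hwpos j x hx
    exact hmono.injOn
  have himg : ∀ j, g j '' S ⊆ I j := by
    rintro j y ⟨x, hx, rfl⟩; exact hgmem j x hx
  have hderivWithin : ∀ j, ∀ x ∈ S, HasDerivWithinAt (g j) ((fd (g j x))⁻¹) S x :=
    fun j x hx => (hgd j x hx).hasDerivWithinAt
  have hcov : ∀ (j : Fin N) (u : ℝ → ℝ),
      ∫ y in g j '' S, u y = ∫ x in S, |(fd (g j x))⁻¹| * u (g j x) := by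
    intro j u
    simpa [smul_eq_mul] using
      integral_image_eq_integral_abs_deriv_smul hSm (hderivWithin j) (hginj j) u
  have hcovInt : ∀ (j : Fin N) (u : ℝ → ℝ), IntegrableOn u (g j '' S) →
      IntegrableOn (fun x => |(fd (g j x))⁻¹| * u (g j x)) S := by
    intro j u hu
    simpa [smul_eq_mul] using
      (integrableOn_image_iff_integrableOn_abs_deriv_smul hSm (hderivWithin j)
        (hginj j) u).1 hu
  set A := ∫ x in S, ‖h' x‖ with hAdef
  set B := ∫ y in S, |Df y| with hBdef
  have hA0 : 0 ≤ A := integral_nonneg fun x => norm_nonneg _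
  have hBτ : τ = lam0⁻¹ + B := by
    rw [hτ, intervalIntegral.integral_of_le zero_le_one, integral_Ioc_eq_integral_Ioo]
  -- a.e. x ≠ 1
  have hae1 : ∀ᵐ x : ℝ, x ≠ 1 := by
    have h0 : (volume ({(1:ℝ)} : Set ℝ)) = 0 := measure_singleton 1
    exact (measure_eq_zero_iff_ae_notMem.mp h0).mono (by intro x hx; simpa using hx)
  -- integrability of h' on Ioc 0 1
  have hIocRestrict : (volume : Measure ℝ).restrict (Set.Ioc 0 1) = volume.restrict S :=
    Measure.restrict_congr_set Ioo_ae_eq_Ioc.symm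
  have h'n : IntegrableOn (fun x => ‖h' x‖) S := hh'int.norm
  have Dfa : IntegrableOn (fun x => |Df x|) S := hDfint.abs
  have h'Ioc : IntegrableOn h' (Set.Ioc 0 1) := by
    rw [IntegrableOn, hIocRestrict]; exact hh'int
  -- FTC
  have hftc : ∀ a b : ℝ, a ∈ Set.Icc (0:ℝ) 1 → b ∈ Set.Icc (0:ℝ) 1 → a ≤ b →
      h b - h a = ∫ x in a..b, h' x := by
    intro a b ha hb hab
    rw [intervalIntegral.integral_eq_sub_of_hasDerivAt_of_le hab
      (hC.mono (Set.Icc_subset_Icc ha.1 hb.2))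
      (fun x hx => hh x ⟨lt_of_le_of_lt ha.1 hx.1, lt_of_lt_of_le hx.2 hb.2⟩)
      ((intervalIntegrable_iff_integrableOn_Ioc_of_le hab).2
        (h'Ioc.mono_set (Set.Ioc_subset_Ioc ha.1 hb.2)))]
  have hIocA : ∀ a b : ℝ, 0 ≤ a → b ≤ 1 → (∫ x in Set.Ioc a b, ‖h' x‖) ≤ A := by
    intro a b ha hb
    apply setIntegral_mono_set h'n
      (Filter.Eventually.of_forall fun x => norm_nonneg _)
    filter_upwards [hae1] with x hx1 hx
    exact ⟨lt_of_le_of_lt ha hx.1, lt_of_le_of_ne (le_trans hx.2 hb) hx1⟩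
  have hdiffA : ∀ a b : ℝ, a ∈ Set.Icc (0:ℝ) 1 → b ∈ Set.Icc (0:ℝ) 1 → a ≤ b →
      ‖h b - h a‖ ≤ A := by
    intro a b ha hb hab
    rw [hftc a b ha hb hab]
    calc ‖∫ x in a..b, h' x‖ ≤ ∫ x in a..b, ‖h' x‖ :=
          intervalIntegral.norm_integral_le_integral_norm hab
      _ = ∫ x in Set.Ioc a b, ‖h' x‖ := intervalIntegral.integral_of_le hab
      _ ≤ A := hIocA a b ha.1 hb.2
  -- sup bound
  have hM : ∀ y ∈ Set.Icc (0:ℝ) 1, ‖h y‖ ≤ A := by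
    intro y hy
    have hCu : ContinuousOn h (Set.uIcc (0:ℝ) 1) := by
      rw [Set.uIcc_of_le zero_le_one]; exact hC
    have hInth : IntervalIntegrable h volume 0 1 := hCu.intervalIntegrable
    have heq : (∫ x in (0:ℝ)..1, (h y - h x)) = h y := by
      rw [intervalIntegral.integral_sub intervalIntegrable_const hInth, hmean,
        intervalIntegral.integral_const]
      simp
    have hbound : ∀ x ∈ Set.uIoc (0:ℝ) 1, ‖h y - h x‖ ≤ A := by
      intro x hx
      rw [Set.uIoc_of_le zero_le_one] at hx
      have hxI : x ∈ Set.Icc (0:ℝ) 1 := ⟨le_of_lt hx.1, hx.2⟩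
      rcases le_total x y with hxy | hyx
      · exact hdiffA x y hxI hy hxy
      · rw [norm_sub_rev]; exact hdiffA y x hy hxI hyx
    have := intervalIntegral.norm_integral_le_of_norm_le_const hbound
    rw [heq] at this
    simpa using this
  have hApos : 0 < A := by
    rcases hne with ⟨x0, hx0, hx0ne⟩
    rcases lt_or_eq_of_le hA0 with hlt | heq
    · exact hlt
    · exact absurd (norm_le_zero_iff.1 (heq ▸ hM x0 hx0)) hx0ne
  -- pointwise derivative identity
  have hkey : ∀ x ∈ S, ν * h' x =
      ∑ j, ((((fd (g j x))⁻¹ : ℝ) • h' (g j x)) * (((fd (g j x))⁻¹ : ℝ) : ℂ)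
        + h (g j x) * ((Df (g j x) * (fd (g j x))⁻¹ : ℝ) : ℂ)) := by
    intro x hx
    have hd : ∀ j : Fin N, HasDerivAt (fun x => h (g j x) * ((fd (g j x) : ℂ))⁻¹)
        ((((fd (g j x))⁻¹ : ℝ) • h' (g j x)) * (((fd (g j x))⁻¹ : ℝ) : ℂ)
          + h (g j x) * ((Df (g j x) * (fd (g j x))⁻¹ : ℝ) : ℂ)) x := by
      intro j
      have hy : g j x ∈ S := hgS j x hx
      have hyI : g j x ∈ I j := hgmem j x hx
      have d1 : HasDerivAt (fun x => h (g j x)) (((fd (g j x))⁻¹ : ℝ) • h' (g j x)) x := by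
        simpa [Function.comp_def] using HasDerivAt.scomp x (hh (g j x) hy) (hgd j x hx)
      have d2r : HasDerivAt (fun x => (fd (g j x))⁻¹) (Df (g j x) * (fd (g j x))⁻¹) x := by
        simpa [Function.comp_def] using HasDerivAt.comp x (hDf j (g j x) hyI) (hgd j x hx)
      have d2 : HasDerivAt (fun x => (((fd (g j x))⁻¹ : ℝ) : ℂ))
          ((Df (g j x) * (fd (g j x))⁻¹ : ℝ) : ℂ) x := d2r.ofReal_comp
      have hfun : (fun x => (((fd (g j x))⁻¹ : ℝ) : ℂ)) = fun x => ((fd (g j x) : ℂ))⁻¹ := by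
        funext y; push_cast; ring
      rw [hfun] at d2
      have := d1.mul d2
      simpa [Complex.ofReal_inv, Pi.mul_def] using this
    have hfunL : (fun x => L1 h x) = fun x => ∑ j, h (g j x) * ((fd (g j x) : ℂ))⁻¹ :=
      funext (hL1 h)
    have hDsum : HasDerivAt (fun x => L1 h x)
        (∑ j, ((((fd (g j x))⁻¹ : ℝ) • h' (g j x)) * (((fd (g j x))⁻¹ : ℝ) : ℂ)
          + h (g j x) * ((Df (g j x) * (fd (g j x))⁻¹ : ℝ) : ℂ))) x := by
      rw [hfunL]
      exact HasDerivAt.fun_sum (fun j _ => hd j)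
    have hνh : HasDerivAt (fun x => ν * h x) (ν * h' x) x := (hh x hx).const_mul ν
    have hEq : (fun x => ν * h x) =ᶠ[nhds x] fun x => L1 h x :=
      Filter.eventuallyEq_of_mem (isOpen_Ioo.mem_nhds hx) (fun y hy => (heig y hy).symm)
    exact hνh.unique (hDsum.congr_of_eventuallyEq hEq)
  -- pointwise bound
  have hptw : ∀ x ∈ S, ‖ν * h' x‖ ≤
      ∑ j, (lam0⁻¹ * (|(fd (g j x))⁻¹| * ‖h' (g j x)‖)
        + A * (|(fd (g j x))⁻¹| * |Df (g j x)|)) := by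
    intro x hx
    rw [hkey x hx]
    refine le_trans (norm_sum_le _ _) (Finset.sum_le_sum fun j _ => ?_)
    have hy : g j x ∈ S := hgS j x hx
    have hw0 : 0 < (fd (g j x))⁻¹ := hwpos j x hx
    have hwle' : (fd (g j x))⁻¹ ≤ lam0⁻¹ := hwle j x hx
    have habs : |(fd (g j x))⁻¹| = (fd (g j x))⁻¹ := abs_of_pos hw0
    have hMy : ‖h (g j x)‖ ≤ A := hM _ ⟨le_of_lt hy.1, le_of_lt hy.2⟩
    refine le_trans (norm_add_le _ _) (add_le_add ?_ ?_)
    · rw [norm_mul, norm_smul]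
      simp only [Real.norm_eq_abs, Complex.norm_real]
      rw [habs]
      have hn0 : (0:ℝ) ≤ ‖h' (g j x)‖ := norm_nonneg _
      calc (fd (g j x))⁻¹ * ‖h' (g j x)‖ * (fd (g j x))⁻¹
          ≤ (fd (g j x))⁻¹ * ‖h' (g j x)‖ * lam0⁻¹ :=
            mul_le_mul_of_nonneg_left hwle' (mul_nonneg hw0.le hn0)
        _ = lam0⁻¹ * ((fd (g j x))⁻¹ * ‖h' (g j x)‖) := by ring
    · rw [norm_mul, Complex.norm_real, Real.norm_eq_abs, abs_mul, habs]
      have hd0 : (0:ℝ) ≤ |Df (g j x)| := abs_nonneg _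
      calc ‖h (g j x)‖ * (|Df (g j x)| * (fd (g j x))⁻¹)
          ≤ A * (|Df (g j x)| * (fd (g j x))⁻¹) :=
            mul_le_mul_of_nonneg_right hMy (mul_nonneg hd0 hw0.le)
        _ = A * ((fd (g j x))⁻¹ * |Df (g j x)|) := by ring
  -- integrability of the bound pieces
  have intg1 : ∀ j, IntegrableOn (fun x => |(fd (g j x))⁻¹| * ‖h' (g j x)‖) S :=
    fun j => hcovInt j (fun y => ‖h' y‖) (h'n.mono_set ((himg j).trans (hIsub j)))
  have intg2 : ∀ j, IntegrableOn (fun x => |(fd (g j x))⁻¹| * |Df (g j x)|) S :=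
    fun j => hcovInt j (fun y => |Df y|) (Dfa.mono_set ((himg j).trans (hIsub j)))
  have intEach : ∀ j : Fin N, IntegrableOn
      (fun x => lam0⁻¹ * (|(fd (g j x))⁻¹| * ‖h' (g j x)‖)
        + A * (|(fd (g j x))⁻¹| * |Df (g j x)|)) S :=
    fun j => ((intg1 j).const_mul _).add ((intg2 j).const_mul _)
  have intBnd : IntegrableOn (fun x => ∑ j,
      (lam0⁻¹ * (|(fd (g j x))⁻¹| * ‖h' (g j x)‖)
        + A * (|(fd (g j x))⁻¹| * |Df (g j x)|))) S :=
    integrable_finset_sum _ fun j _ => intEach j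
  -- integrate the pointwise bound
  have hstep : ∫ x in S, ‖ν * h' x‖ ≤ ∫ x in S, (∑ j,
      (lam0⁻¹ * (|(fd (g j x))⁻¹| * ‖h' (g j x)‖)
        + A * (|(fd (g j x))⁻¹| * |Df (g j x)|))) :=
    setIntegral_mono_on ((hh'int.const_mul ν).norm) intBnd hSm hptw
  have hLHS : ∫ x in S, ‖ν * h' x‖ = ‖ν‖ * A := by
    simp only [norm_mul]
    rw [integral_const_mul, hAdef]
  -- branch integrals
  have hPle : ∀ j, (∫ x in S, |(fd (g j x))⁻¹| * ‖h' (g j x)‖) ≤ ∫ y in I j, ‖h' y‖ := by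
    intro j
    rw [← hcov j (fun y => ‖h' y‖)]
    exact setIntegral_mono_set (h'n.mono_set (hIsub j))
      (Filter.Eventually.of_forall fun x => norm_nonneg _)
      (Filter.Eventually.of_forall fun x hx => himg j hx)
  have hQle : ∀ j, (∫ x in S, |(fd (g j x))⁻¹| * |Df (g j x)|) ≤ ∫ y in I j, |Df y| := by
    intro j
    rw [← hcov j (fun y => |Df y|)]
    exact setIntegral_mono_set (Dfa.mono_set (hIsub j))
      (Filter.Eventually.of_forall fun x => abs_nonneg _)
      (Filter.Eventually.of_forall fun x hx => himg j hx)
  -- disjointness of branches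
  have hdisj : Pairwise (Function.onFun Disjoint I) := by
    have key : ∀ j k : Fin N, j < k → Disjoint (I j) (I k) := by
      intro j k hjk
      have hle : p j.succ ≤ p k.castSucc := by
        apply hp.monotone
        rw [Fin.le_def, Fin.val_succ, Fin.coe_castSucc]
        exact Nat.succ_le_of_lt hjk
      rw [Set.disjoint_left]
      intro x hxj hxk
      exact absurd (lt_trans (lt_of_lt_of_le hxj.2 hle) hxk.1) (lt_irrefl x)
    intro j k hjk
    rcases lt_or_gt_of_ne hjk with hlt | hgt
    · exact key j k hlt
    · exact (key k j hgt).symm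
  have hsum_le : ∀ u : ℝ → ℝ, IntegrableOn u S → (∀ x, 0 ≤ u x) →
      (∑ j, ∫ y in I j, u y) ≤ ∫ y in S, u y := by
    intro u hu hu0
    have hUsub : (⋃ j, I j) ⊆ S := Set.iUnion_subset hIsub
    calc (∑ j, ∫ y in I j, u y) = ∫ y in ⋃ j, I j, u y := by
          rw [integral_iUnion hIm hdisj (hu.mono_set hUsub), tsum_fintype]
      _ ≤ ∫ y in S, u y := setIntegral_mono_set hu
          (Filter.Eventually.of_forall fun x => hu0 x)
          (Filter.Eventually.of_forall fun x hx => hUsub hx)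
  have hPsum : (∑ j, ∫ x in S, |(fd (g j x))⁻¹| * ‖h' (g j x)‖) ≤ A := by
    calc (∑ j, ∫ x in S, |(fd (g j x))⁻¹| * ‖h' (g j x)‖)
        ≤ ∑ j, ∫ y in I j, ‖h' y‖ := Finset.sum_le_sum fun j _ => hPle j
      _ ≤ A := hsum_le _ h'n (fun x => norm_nonneg _)
  have hQsum : (∑ j, ∫ x in S, |(fd (g j x))⁻¹| * |Df (g j x)|) ≤ B := by
    calc (∑ j, ∫ x in S, |(fd (g j x))⁻¹| * |Df (g j x)|)
        ≤ ∑ j, ∫ y in I j, |Df y| := Finset.sum_le_sum fun j _ => hQle j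
      _ ≤ B := hsum_le _ Dfa (fun x => abs_nonneg _)
  have hRHS : ∫ x in S, (∑ j,
      (lam0⁻¹ * (|(fd (g j x))⁻¹| * ‖h' (g j x)‖)
        + A * (|(fd (g j x))⁻¹| * |Df (g j x)|)))
      = lam0⁻¹ * (∑ j, ∫ x in S, |(fd (g j x))⁻¹| * ‖h' (g j x)‖)
        + A * (∑ j, ∫ x in S, |(fd (g j x))⁻¹| * |Df (g j x)|) := by
    rw [integral_finset_sum _ (fun j _ => intEach j)]
    rw [Finset.mul_sum, Finset.mul_sum, ← Finset.sum_add_distrib]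
    refine Finset.sum_congr rfl fun j _ => ?_
    rw [integral_add ((intg1 j).const_mul _) ((intg2 j).const_mul _),
      integral_const_mul, integral_const_mul]
  have hlam0inv0 : (0:ℝ) ≤ lam0⁻¹ := inv_nonneg.2 (le_of_lt (lt_trans one_pos hlam0))
  have hfinal : ‖ν‖ * A ≤ (lam0⁻¹ + B) * A := by
    calc ‖ν‖ * A = ∫ x in S, ‖ν * h' x‖ := hLHS.symm
      _ ≤ _ := hstep
      _ = lam0⁻¹ * (∑ j, ∫ x in S, |(fd (g j x))⁻¹| * ‖h' (g j x)‖)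
          + A * (∑ j, ∫ x in S, |(fd (g j x))⁻¹| * |Df (g j x)|) := hRHS
      _ ≤ lam0⁻¹ * A + A * B :=
          add_le_add (mul_le_mul_of_nonneg_left hPsum hlam0inv0)
            (mul_le_mul_of_nonneg_left hQsum hA0)
      _ = (lam0⁻¹ + B) * A := by ring
  rw [hBτ]
  exact le_of_mul_le_mul_right hfinal hApos
end

section
/- Let f ∈ 𝓔 be a full branch monotone map of [0,1] with f' ≥ 1, f' = 1 at only finitely many points, and ‖f'‖_∞ < ∞. Then f is expansive: there exists δ > 0 such that if |f^n(x) − f^n(y)| ≤ δ for all n ∈ ℕ₀, then x = y. -/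
open Set

lemma pigeon13 (S : Finset ℝ) (u L : ℝ) (hL : 0 < L) :
    ∃ i : ℕ, i < 2 * S.card + 2 ∧
      ∀ s ∈ S, ∀ t ∈ Set.Icc (u + i * L) (u + (i + 1) * L), L / 2 ≤ |t - s| := by
  classical
  by_contra h
  push_neg at h
  choose sf hsf tf htf hlt using h
  have hmaps : ∀ i ∈ Finset.range (2 * S.card + 2),
      (fun i => if hi : i < 2 * S.card + 2 then sf i hi else 0) i ∈ S := by
    intro i hi
    simp only [Finset.mem_range] at hi
    simp [hi, hsf]
  have hcard : S.card * 2 < (Finset.range (2 * S.card + 2)).card := by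
    simp; omega
  obtain ⟨y, hyS, hy⟩ := Finset.exists_lt_card_fiber_of_mul_lt_card_of_maps_to hmaps hcard
  rw [Finset.two_lt_card_iff] at hy
  obtain ⟨a, b, c, ha, hb, hc, hab, hac, hbc⟩ := hy
  simp only [Finset.mem_filter, Finset.mem_range] at ha hb hc
  have key : ∀ i (hi : i < 2 * S.card + 2),
      (if hi' : i < 2 * S.card + 2 then sf i hi' else 0) = y →
      u + i * L - L / 2 < y ∧ y < u + (i + 1) * L + L / 2 := by
    intro i hi heq
    rw [dif_pos hi] at heq
    have h1 := htf i hi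
    have h2 := hlt i hi
    rw [heq] at h2
    have h3 := abs_lt.mp h2
    constructor
    · nlinarith [h1.1, h3.1, h3.2]
    · nlinarith [h1.2, h3.1, h3.2]
  have ka := key a ha.1 ha.2
  have kb := key b hb.1 hb.2
  have kc := key c hc.1 hc.2
  set i := min a (min b c) with hidef
  set j := max a (max b c) with hjdef
  have hij : i + 2 ≤ j := by omega
  have hieq : i = a ∨ i = b ∨ i = c := by omega
  have hjeq : j = a ∨ j = b ∨ j = c := by omega
  have ki : u + i * L - L / 2 < y ∧ y < u + (i + 1) * L + L / 2 := by
    rcases hieq with h | h | h <;> rw [h] <;> assumption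
  have kj : u + j * L - L / 2 < y ∧ y < u + (j + 1) * L + L / 2 := by
    rcases hjeq with h | h | h <;> rw [h] <;> assumption
  have hcast : (i:ℝ) + 2 ≤ (j:ℝ) := by exact_mod_cast hij
  nlinarith [ki.2, kj.1, mul_nonneg (sub_nonneg.mpr (by linarith : (i:ℝ) + 2 ≤ (j:ℝ))) hL.le]


set_option maxHeartbeats 800000 in
/-- A full branch monotone map of `[0,1]` with `f' ≥ 1`, `f' = 1` at only
finitely many points and `‖f'‖_∞ < ∞`, is expansive: there is `δ > 0` such that if two orbits
stay `δ`-close forever, the initial points coincide. -/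
theorem stmt13
    (N : ℕ) (hN : 0 < N) (p : Fin (N + 1) → ℝ) (hp : StrictMono p)
    (hp0 : p 0 = 0) (hpN : p (Fin.last N) = 1)
    (f fd : ℝ → ℝ) (Λ : ℝ)
    (hmaps : Set.MapsTo f (Set.Icc 0 1) (Set.Icc 0 1))
    (hfd : ∀ i : Fin N, ∀ x ∈ Set.Ioo (p i.castSucc) (p i.succ), HasDerivAt f (fd x) x)
    (hfdc : ∀ i : Fin N, ContinuousOn fd (Set.Icc (p i.castSucc) (p i.succ)))
    (hmono : ∀ i : Fin N, StrictMonoOn f (Set.Ioo (p i.castSucc) (p i.succ)))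
    (hfull : ∀ i : Fin N, f '' Set.Ioo (p i.castSucc) (p i.succ) = Set.Ioo 0 1)
    (hfd1 : ∀ x ∈ Set.Icc (0:ℝ) 1, 1 ≤ fd x)
    (hfin : {x | x ∈ Set.Icc (0:ℝ) 1 ∧ fd x = 1}.Finite)
    (hΛ : ∀ x ∈ Set.Icc (0:ℝ) 1, fd x ≤ Λ) :
    ∃ δ > 0, ∀ x ∈ Set.Icc (0:ℝ) 1, ∀ y ∈ Set.Icc (0:ℝ) 1,
      (∀ n : ℕ, |f^[n] x - f^[n] y| ≤ δ) → x = y := by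
  classical
  have hΛ1 : 1 ≤ Λ := le_trans (hfd1 0 ⟨le_refl 0, zero_le_one⟩) (hΛ 0 ⟨le_refl 0, zero_le_one⟩)
  have hpmem : ∀ i, p i ∈ Set.Icc (0:ℝ) 1 := fun i =>
    ⟨hp0 ▸ hp.monotone (Fin.zero_le i), hpN ▸ hp.monotone (Fin.le_last i)⟩
  have j0 : Fin N := ⟨0, hN⟩
  set gap := Finset.univ.inf' (Finset.univ_nonempty_iff.mpr ⟨⟨0, hN⟩⟩)
    (fun j : Fin N => p j.succ - p j.castSucc) with hgapdef
  have hgap_pos : 0 < gap := by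
    rw [hgapdef, Finset.lt_inf'_iff]
    exact fun j _ => sub_pos.mpr (hp (Fin.castSucc_lt_succ (i := j)))
  have hgap_le : ∀ j : Fin N, gap ≤ p j.succ - p j.castSucc := fun j =>
    Finset.inf'_le _ (Finset.mem_univ j)
  have hPgap : ∀ i i' : Fin (N+1), p i < p i' → p i + gap ≤ p i' := by
    intro i i' hlt
    have hii : i < i' := hp.lt_iff_lt.mp hlt
    have hiN : (i : ℕ) < N := by
      have h1 : (i : ℕ) < (i' : ℕ) := hii
      have h2 : (i' : ℕ) ≤ N := Fin.is_le i'
      omega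
    set j : Fin N := ⟨i, hiN⟩ with hj
    have h1 : j.castSucc = i := by ext; simp [hj]
    have h2 : j.succ ≤ i' := by
      rw [Fin.le_def]
      simp only [Fin.val_succ, hj]
      exact hii
    have h3 := hgap_le j
    have h4 : p j.succ ≤ p i' := hp.monotone h2
    rw [h1] at h3
    linarith
  have hPOS : ∀ t, t ∈ Set.Icc (0:ℝ) 1 → t ∉ Set.range p →
      ∃ j : Fin N, t ∈ Set.Ioo (p j.castSucc) (p j.succ) := by
    intro t ht hnr
    set F := Finset.univ.filter (fun i : Fin (N+1) => p i ≤ t) with hF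
    have hne : F.Nonempty := ⟨0, by simp [hF, hp0, ht.1]⟩
    set m := F.max' hne with hm
    have hmF : m ∈ F := F.max'_mem hne
    have hmle : p m ≤ t := by
      have := Finset.mem_filter.mp hmF
      exact this.2
    have hmlt : p m < t := lt_of_le_of_ne hmle (fun h => hnr ⟨m, h⟩)
    have hmN : (m : ℕ) < N := by
      by_contra hcon
      have h1 : (m : ℕ) ≤ N := Fin.is_le m
      have h2 : m = Fin.last N := by
        apply Fin.ext
        simp only [Fin.val_last]
        omega
      rw [h2, hpN] at hmlt
      exact absurd ht.2 (not_le.mpr hmlt)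
    refine ⟨⟨m, hmN⟩, ?_, ?_⟩
    · have : (⟨(m:ℕ), hmN⟩ : Fin N).castSucc = m := by ext; simp
      rw [this]; exact hmlt
    · by_contra hcon
      push_neg at hcon
      have hmem : (⟨(m:ℕ), hmN⟩ : Fin N).succ ∈ F := by
        simp only [hF, Finset.mem_filter]
        exact ⟨Finset.mem_univ _, hcon⟩
      have := F.le_max' _ hmem
      rw [← hm] at this
      rw [Fin.le_def] at this
      simp only [Fin.val_succ] at this
      omega
  have hIoo_sub : ∀ j : Fin N, Set.Ioo (p j.castSucc) (p j.succ) ⊆ Set.Icc (0:ℝ) 1 :=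
    fun j t ht => ⟨le_trans (hpmem j.castSucc).1 ht.1.le, le_trans ht.2.le (hpmem j.succ).2⟩
  have himg : ∀ (j : Fin N) t, t ∈ Set.Ioo (p j.castSucc) (p j.succ) → f t ∈ Set.Ioo (0:ℝ) 1 :=
    fun j t ht => (hfull j) ▸ Set.mem_image_of_mem f ht
  have hsurj : ∀ (j : Fin N) v, v ∈ Set.Ioo (0:ℝ) 1 →
      ∃ u ∈ Set.Ioo (p j.castSucc) (p j.succ), f u = v := by
    intro j v hv
    rw [← hfull j] at hv
    obtain ⟨u, hu, huv⟩ := hv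
    exact ⟨u, hu, huv⟩
  have hicc : ∀ (n : ℕ) t, t ∈ Set.Icc (0:ℝ) 1 → f^[n] t ∈ Set.Icc (0:ℝ) 1 := by
    intro n
    induction n with
    | zero => intro t ht; simpa using ht
    | succ k ih =>
      intro t ht
      rw [Function.iterate_succ_apply']
      exact hmaps (ih t ht)
  have hMg : ∀ (j : Fin N) (u w c : ℝ), u ∈ Set.Ioo (p j.castSucc) (p j.succ) →
      w ∈ Set.Ioo (p j.castSucc) (p j.succ) → u ≤ w → 0 ≤ c →
      (∀ t ∈ Set.Ioo u w, c ≤ fd t) → c * (w - u) ≤ f w - f u := by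
    intro j u w c hu hw huw hc hbd
    rcases eq_or_lt_of_le huw with heq | hlt
    · simp [heq]
    · have hIcc : Set.Icc u w ⊆ Set.Ioo (p j.castSucc) (p j.succ) :=
        Set.Icc_subset_Ioo hu.1 hw.2
      have hcont : ContinuousOn f (Set.Icc u w) := fun t ht =>
        ((hfd j t (hIcc ht)).continuousAt).continuousWithinAt
      have hderiv : ∀ t ∈ Set.Ioo u w, HasDerivAt f (fd t) t := fun t ht =>
        hfd j t (hIcc ⟨ht.1.le, ht.2.le⟩)
      obtain ⟨ξ, hξ, hslope⟩ := exists_hasDerivAt_eq_slope f fd hlt hcont hderiv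
      have hb := hbd ξ hξ
      rw [hslope] at hb
      have hwu : 0 < w - u := sub_pos.mpr hlt
      calc c * (w - u) ≤ ((f w - f u) / (w - u)) * (w - u) :=
            mul_le_mul_of_nonneg_right hb hwu.le
        _ = f w - f u := div_mul_cancel₀ _ (ne_of_gt hwu)
  have hMu : ∀ (j : Fin N) (u w : ℝ), u ∈ Set.Ioo (p j.castSucc) (p j.succ) →
      w ∈ Set.Ioo (p j.castSucc) (p j.succ) → u ≤ w → f w - f u ≤ Λ * (w - u) := by
    intro j u w hu hw huw
    rcases eq_or_lt_of_le huw with heq | hlt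
    · simp [heq]
    · have hIcc : Set.Icc u w ⊆ Set.Ioo (p j.castSucc) (p j.succ) :=
        Set.Icc_subset_Ioo hu.1 hw.2
      have hcont : ContinuousOn f (Set.Icc u w) := fun t ht =>
        ((hfd j t (hIcc ht)).continuousAt).continuousWithinAt
      have hderiv : ∀ t ∈ Set.Ioo u w, HasDerivAt f (fd t) t := fun t ht =>
        hfd j t (hIcc ⟨ht.1.le, ht.2.le⟩)
      obtain ⟨ξ, hξ, hslope⟩ := exists_hasDerivAt_eq_slope f fd hlt hcont hderiv
      have hb : fd ξ ≤ Λ := hΛ ξ (hIoo_sub j (hIcc ⟨hξ.1.le, hξ.2.le⟩))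
      rw [hslope] at hb
      have hwu : 0 < w - u := sub_pos.mpr hlt
      calc f w - f u = ((f w - f u) / (w - u)) * (w - u) :=
            (div_mul_cancel₀ _ (ne_of_gt hwu)).symm
        _ ≤ Λ * (w - u) := mul_le_mul_of_nonneg_right hb hwu.le
  have hMlb : ∀ (j : Fin N) (u w : ℝ), u ∈ Set.Ioo (p j.castSucc) (p j.succ) →
      w ∈ Set.Ioo (p j.castSucc) (p j.succ) → u ≤ w → w - u ≤ f w - f u := by
    intro j u w hu hw huw
    have := hMg j u w 1 hu hw huw zero_le_one
      (fun t ht => hfd1 t (hIoo_sub j (Set.Icc_subset_Ioo hu.1 hw.2 ⟨ht.1.le, ht.2.le⟩)))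
    linarith
  -- lower bound near left endpoint : f w ≥ w - a_j
  have hLow : ∀ (j : Fin N) w, w ∈ Set.Ioo (p j.castSucc) (p j.succ) →
      w - p j.castSucc ≤ f w := by
    intro j w hw
    by_contra hcon
    push_neg at hcon
    have hfw := himg j w hw
    set a := p j.castSucc with ha
    set u := (a + (w - f w)) / 2 with hu
    have hu1 : a < u := by rw [hu]; linarith [hcon]
    have hu2 : u < w := by rw [hu]; nlinarith [hfw.1, hcon]
    have huO : u ∈ Set.Ioo (p j.castSucc) (p j.succ) := ⟨hu1, lt_trans hu2 hw.2⟩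
    have := hMlb j u w huO hw hu2.le
    have hfu := himg j u huO
    have : w - u ≤ f w - f u := this
    rw [hu] at this
    nlinarith [hfu.1]
  -- upper bound near left endpoint : f w ≤ Λ (w - a_j)
  have hUp : ∀ (j : Fin N) w, w ∈ Set.Ioo (p j.castSucc) (p j.succ) →
      f w ≤ Λ * (w - p j.castSucc) := by
    intro j w hw
    by_contra hcon
    push_neg at hcon
    have hfw := himg j w hw
    set η := f w - Λ * (w - p j.castSucc) with hη
    have hηpos : 0 < η := by rw [hη]; linarith
    set v := min η (f w) / 2 with hv
    have hv1 : 0 < v := by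
      rw [hv]
      have := lt_min hηpos hfw.1
      linarith
    have hvlt : v < f w := by
      rw [hv]
      have : min η (f w) ≤ f w := min_le_right _ _
      linarith [hfw.1]
    have hv2 : v < 1 := lt_trans hvlt hfw.2
    obtain ⟨u, huO, hfu⟩ := hsurj j v ⟨hv1, hv2⟩
    have hulw : u < w := by
      have := (hmono j).lt_iff_lt huO hw
      rw [← this, hfu]
      exact hvlt
    have hmu := hMu j u w huO hw hulw.le
    have hwa : w - u ≤ w - p j.castSucc := by linarith [huO.1]
    have hΛ0 : (0:ℝ) ≤ Λ := by linarith
    have h2 : f w - f u ≤ Λ * (w - p j.castSucc) :=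
      le_trans hmu (mul_le_mul_of_nonneg_left hwa hΛ0)
    have hveta : v ≤ η / 2 := by
      rw [hv]
      have : min η (f w) ≤ η := min_le_left _ _
      linarith
    rw [hfu] at h2
    have hηeq : η = f w - Λ * (w - p j.castSucc) := hη
    linarith
  -- lower bound near right endpoint : f w ≥ 1 - Λ (b_j - w)
  have hHigh : ∀ (j : Fin N) w, w ∈ Set.Ioo (p j.castSucc) (p j.succ) →
      1 - Λ * (p j.succ - w) ≤ f w := by
    intro j w hw
    by_contra hcon
    push_neg at hcon
    have hfw := himg j w hw
    set η := 1 - Λ * (p j.succ - w) - f w with hη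
    have hηpos : 0 < η := by rw [hη]; linarith
    have hη1 : η ≤ 1 - f w := by
      rw [hη]
      have : 0 ≤ Λ * (p j.succ - w) := mul_nonneg (by linarith) (by linarith [hw.2])
      linarith
    set v := 1 - min η (1 - f w) / 2 with hv
    have hmin_pos : 0 < min η (1 - f w) := lt_min hηpos (by linarith [hfw.2])
    have hmin_le : min η (1 - f w) ≤ 1 - f w := min_le_right _ _
    have hv1 : 0 < v := by
      rw [hv]
      have : min η (1 - f w) ≤ 1 - f w := hmin_le
      nlinarith [hfw.1, hfw.2]
    have hv2 : v < 1 := by rw [hv]; linarith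
    have hvgt : f w < v := by
      rw [hv]
      linarith
    obtain ⟨u, huO, hfu⟩ := hsurj j v ⟨hv1, hv2⟩
    have hugt : w < u := by
      have := (hmono j).lt_iff_lt hw huO
      rw [← this, hfu]
      exact hvgt
    have hmu := hMu j w u hw huO hugt.le
    have hub : u - w ≤ p j.succ - w := by linarith [huO.2]
    have hΛ0 : (0:ℝ) ≤ Λ := by linarith
    have h2 : f u - f w ≤ Λ * (p j.succ - w) :=
      le_trans hmu (mul_le_mul_of_nonneg_left hub hΛ0)
    have hveta : min η (1 - f w) ≤ η := min_le_left _ _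
    rw [hfu, hv] at h2
    rw [hη] at hveta
    nlinarith
  -- upper bound near right endpoint : f w ≤ 1 - (b_j - w)
  have hUp' : ∀ (j : Fin N) w, w ∈ Set.Ioo (p j.castSucc) (p j.succ) →
      f w ≤ 1 - (p j.succ - w) := by
    intro j w hw
    by_contra hcon
    push_neg at hcon
    have hfw := himg j w hw
    set s := ((w + (1 - f w)) + p j.succ) / 2 with hs
    have hs1 : w < s := by rw [hs]; nlinarith [hfw.2, hw.2]
    have hs2 : s < p j.succ := by rw [hs]; nlinarith [hfw.2]
    have hsO : s ∈ Set.Ioo (p j.castSucc) (p j.succ) := ⟨lt_trans hw.1 hs1, hs2⟩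
    have hmlb := hMlb j w s hw hsO hs1.le
    have hfs := himg j s hsO
    have hsw : 1 - f w < s - w := by rw [hs]; nlinarith
    linarith [hfs.2]
  -- uniform expansion lemma
  have hexp : ∀ d₀ : ℝ, 0 < d₀ → ∃ ε > 0, ∀ (j : Fin N) (u w : ℝ),
      u ∈ Set.Ioo (p j.castSucc) (p j.succ) → w ∈ Set.Ioo (p j.castSucc) (p j.succ) →
      u + d₀ ≤ w → f u + (w - u) + ε ≤ f w := by
    intro d₀ hd₀
    set S : Finset ℝ := hfin.toFinset with hS
    obtain ⟨n, hn⟩ : ∃ n : ℕ, n = 2 * S.card + 2 := ⟨_, rfl⟩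
    have hnpos : (0:ℝ) < (n:ℝ) := by
      have : 0 < n := by omega
      exact_mod_cast this
    set L : ℝ := d₀ / (n:ℝ) with hL
    have hLpos : 0 < L := div_pos hd₀ hnpos
    have hbranch : ∀ j : Fin N, ∃ m : ℝ, 1 < m ∧ ∀ t,
        t ∈ Set.Icc (p j.castSucc) (p j.succ) → t ∈ Set.Icc (0:ℝ) 1 →
        (∀ s ∈ S, L / 2 ≤ |t - s|) → m ≤ fd t := by
      intro j
      set K : Set ℝ := Set.Icc (p j.castSucc) (p j.succ) ∩
        (Set.Icc (0:ℝ) 1 ∩ ⋂ s ∈ (S : Set ℝ), {t : ℝ | L / 2 ≤ |t - s|}) with hK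
      have hKmem : ∀ t, t ∈ K ↔ (t ∈ Set.Icc (p j.castSucc) (p j.succ) ∧
          t ∈ Set.Icc (0:ℝ) 1 ∧ ∀ s ∈ S, L / 2 ≤ |t - s|) := by
        intro t
        simp only [hK, Set.mem_inter_iff, Set.mem_iInter, Set.mem_setOf_eq, Finset.mem_coe,
          and_assoc]
      have hKclosed : IsClosed (Set.Icc (0:ℝ) 1 ∩ ⋂ s ∈ (S : Set ℝ), {t : ℝ | L / 2 ≤ |t - s|}) := by
        apply isClosed_Icc.inter
        apply isClosed_biInter
        intro s _
        exact isClosed_le continuous_const ((continuous_id.sub continuous_const).abs)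
      have hKcomp : IsCompact K := isCompact_Icc.inter_right hKclosed
      rcases Set.eq_empty_or_nonempty K with hemp | hne
      · refine ⟨2, one_lt_two, fun t h1 h2 h3 => ?_⟩
        exfalso
        have : t ∈ K := (hKmem t).mpr ⟨h1, h2, h3⟩
        rw [hemp] at this
        exact this
      · obtain ⟨t₀, ht₀K, hminOn⟩ := hKcomp.exists_isMinOn hne
          ((hfdc j).mono (fun t ht => ((hKmem t).mp ht).1))
        have ht₀ := (hKmem t₀).mp ht₀K
        have h1le : 1 ≤ fd t₀ := hfd1 t₀ ht₀.2.1
        have hne1 : fd t₀ ≠ 1 := by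
          intro heq
          have hmem : t₀ ∈ S := by
            rw [hS, Set.Finite.mem_toFinset]
            exact ⟨ht₀.2.1, heq⟩
          have := ht₀.2.2 t₀ hmem
          simp at this
          linarith [hLpos]
        refine ⟨fd t₀, lt_of_le_of_ne h1le (Ne.symm hne1), fun t h1 h2 h3 => ?_⟩
        exact isMinOn_iff.mp hminOn t ((hKmem t).mpr ⟨h1, h2, h3⟩)
    choose m hm1 hm2 using hbranch
    set m₀ := Finset.univ.inf' (Finset.univ_nonempty_iff.mpr ⟨⟨0, hN⟩⟩) m with hm₀
    have hm₀1 : 1 < m₀ := by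
      rw [hm₀, Finset.lt_inf'_iff]
      exact fun j _ => hm1 j
    refine ⟨(m₀ - 1) * L, by nlinarith, ?_⟩
    intro j u w hu hw hsep
    obtain ⟨i, hi, hgood⟩ := pigeon13 S u L hLpos
    set aa := u + (i : ℝ) * L with haa
    set bb := u + ((i : ℝ) + 1) * L with hbb
    have huaa : u ≤ aa := by
      rw [haa]
      have : (0:ℝ) ≤ (i:ℝ) * L := mul_nonneg (Nat.cast_nonneg i) hLpos.le
      linarith
    have haabb : aa < bb := by rw [haa, hbb]; nlinarith
    have hbbw : bb ≤ w := by
      have hiL : ((i:ℝ) + 1) * L ≤ d₀ := by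
        have h1 : ((i:ℝ) + 1) ≤ (n:ℝ) := by
          have : i + 1 ≤ n := by omega
          exact_mod_cast this
        have h2 : (n:ℝ) * L = d₀ := by
          rw [hL]
          field_simp
        nlinarith [hLpos]
      rw [hbb]
      linarith
    have haaO : aa ∈ Set.Ioo (p j.castSucc) (p j.succ) :=
      ⟨lt_of_lt_of_le hu.1 huaa, lt_trans (lt_of_lt_of_le haabb hbbw) hw.2⟩
    have hbbO : bb ∈ Set.Ioo (p j.castSucc) (p j.succ) :=
      ⟨lt_of_lt_of_le hu.1 (le_trans huaa haabb.le), lt_of_le_of_lt hbbw hw.2⟩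
    have piece1 := hMg j u aa 1 hu haaO huaa zero_le_one
      (fun t ht => hfd1 t (hIoo_sub j (Set.Icc_subset_Ioo hu.1 haaO.2 ⟨ht.1.le, ht.2.le⟩)))
    have piece3 := hMg j bb w 1 hbbO hw hbbw zero_le_one
      (fun t ht => hfd1 t (hIoo_sub j (Set.Icc_subset_Ioo hbbO.1 hw.2 ⟨ht.1.le, ht.2.le⟩)))
    have piece2 := hMg j aa bb m₀ haaO hbbO haabb.le (by linarith)
      (by
        intro t ht
        have htO : t ∈ Set.Ioo (p j.castSucc) (p j.succ) :=
          Set.Icc_subset_Ioo haaO.1 hbbO.2 ⟨ht.1.le, ht.2.le⟩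
        have hb := hm2 j t ⟨htO.1.le, htO.2.le⟩ (hIoo_sub j htO)
          (fun s hs => hgood s hs t ⟨ht.1.le, ht.2.le⟩)
        exact le_trans (Finset.inf'_le _ (Finset.mem_univ j)) hb)
    have hbbaa : bb - aa = L := by rw [haa, hbb]; ring
    rw [hbbaa] at piece2
    linarith [piece1, piece2, piece3]
  -- constants
  set Pfin : Finset ℝ := Finset.image p Finset.univ with hPfin
  set B : Finset ℝ := (Finset.image f Pfin).filter (fun v => v ≠ 0 ∧ v ≠ 1) with hB
  set β : ℝ := if hBne : B.Nonempty then B.inf' hBne (fun v => min v (1 - v)) else 1 with hβ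
  have hβpos : 0 < β := by
    rw [hβ]
    by_cases hBne : B.Nonempty
    · rw [dif_pos hBne, Finset.lt_inf'_iff]
      intro v hv
      simp only [hB, Finset.mem_filter, Finset.mem_image] at hv
      obtain ⟨⟨q, hq, hfq⟩, hv0, hv1⟩ := hv
      have hq' : q ∈ Pfin := hq
      rw [hPfin, Finset.mem_image] at hq'
      obtain ⟨i, _, hpi⟩ := hq'
      have hv01 : v ∈ Set.Icc (0:ℝ) 1 := by
        rw [← hfq, ← hpi]; exact hmaps (hpmem i)
      refine lt_min (lt_of_le_of_ne hv01.1 (Ne.symm hv0)) ?_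
      rcases lt_or_eq_of_le hv01.2 with h | h
      · linarith
      · exact absurd h hv1
    · rw [dif_neg hBne]; exact one_pos
  have hβle : ∀ i : Fin (N+1), f (p i) ≠ 0 → f (p i) ≠ 1 →
      β ≤ min (f (p i)) (1 - f (p i)) := by
    intro i h0 h1
    have hmem : f (p i) ∈ B := by
      simp only [hB, Finset.mem_filter, Finset.mem_image]
      refine ⟨⟨p i, ?_, rfl⟩, h0, h1⟩
      rw [hPfin]
      exact Finset.mem_image_of_mem p (Finset.mem_univ i)
    have hne : B.Nonempty := ⟨_, hmem⟩
    rw [hβ, dif_pos hne]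
    exact Finset.inf'_le _ hmem
  set δ : ℝ := min gap (min β 1) / (4 * (Λ^2 + 1)) with hδdef
  have hD : (0:ℝ) < 4 * (Λ^2 + 1) := by positivity
  have hδpos : 0 < δ := by
    rw [hδdef]; exact div_pos (lt_min hgap_pos (lt_min hβpos one_pos)) hD
  have hδmul : δ * (4 * (Λ^2 + 1)) ≤ gap ∧ δ * (4 * (Λ^2 + 1)) ≤ β ∧
      δ * (4 * (Λ^2 + 1)) ≤ 1 := by
    rw [hδdef, div_mul_cancel₀ _ (ne_of_gt hD)]
    exact ⟨min_le_left _ _, le_trans (min_le_right _ _) (min_le_left _ _),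
      le_trans (min_le_right _ _) (min_le_right _ _)⟩
  have hδgap : δ < gap := by nlinarith [hδmul.1, hδpos, hΛ1, sq_nonneg Λ]
  have hδβ : (Λ + 1) * δ < β := by nlinarith [hδmul.2.1, hδpos, hΛ1, sq_nonneg (Λ - 1), mul_pos hδpos (by nlinarith [sq_nonneg (Λ-1)] : (0:ℝ) < Λ^2 - Λ + 1)]
  have hδ1 : (Λ + 1) * δ < 1 := by nlinarith [hδmul.2.2, hδpos, hΛ1, mul_pos hδpos (by nlinarith [sq_nonneg (Λ-1)] : (0:ℝ) < Λ^2 - Λ + 1)]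
  have hδ2 : 2 * Λ * δ + δ < 1 := by nlinarith [hδmul.2.2, hδpos, hΛ1, mul_pos hδpos (by nlinarith [sq_nonneg (Λ-1)] : (0:ℝ) < Λ^2 - Λ + 1)]
  -- straddle exclusion
  have hstraddle : ∀ a b : ℝ, a ∈ Set.Icc (0:ℝ) 1 → b ∈ Set.Icc (0:ℝ) 1 → a < b →
      b - a ≤ δ → (∃ i : Fin (N+1), a < p i ∧ p i < b) → |f a - f b| ≤ δ → False := by
    rintro a b ha hb hab hd ⟨i, hia, hib⟩ hfab
    have hi0 : 0 < (i:ℕ) := by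
      by_contra h
      have : i = 0 := Fin.ext (by simp only [Fin.val_zero]; omega)
      rw [this, hp0] at hia
      linarith [ha.1]
    have hiN : (i:ℕ) < N := by
      by_contra h
      have h1 : (i:ℕ) ≤ N := Fin.is_le i
      have : i = Fin.last N := Fin.ext (by simp only [Fin.val_last]; omega)
      rw [this, hpN] at hib
      linarith [hb.2]
    set jR : Fin N := ⟨(i:ℕ), hiN⟩ with hjR
    set jL : Fin N := ⟨(i:ℕ) - 1, by omega⟩ with hjL
    have hjRc : (jR.castSucc : Fin (N+1)) = i := Fin.ext (by simp [hjR])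
    have hjLs : (jL.succ : Fin (N+1)) = i := Fin.ext (by simp [hjL, Fin.val_succ]; omega)
    have hbO : b ∈ Set.Ioo (p jR.castSucc) (p jR.succ) := by
      rw [hjRc]
      refine ⟨hib, ?_⟩
      have := hgap_le jR
      rw [hjRc] at this
      linarith
    have haO : a ∈ Set.Ioo (p jL.castSucc) (p jL.succ) := by
      rw [hjLs]
      refine ⟨?_, hia⟩
      have := hgap_le jL
      rw [hjLs] at this
      linarith
    have hfa := hHigh jL a haO
    rw [hjLs] at hfa
    have hfb := hUp jR b hbO
    rw [hjRc] at hfb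
    have hΛ0 : (0:ℝ) ≤ Λ := by linarith
    have h1 : Λ * (p i - a) ≤ Λ * δ := mul_le_mul_of_nonneg_left (by linarith) hΛ0
    have h2 : Λ * (b - p i) ≤ Λ * δ := mul_le_mul_of_nonneg_left (by linarith) hΛ0
    have h3 : f a - f b ≤ |f a - f b| := le_abs_self _
    linarith
  -- same branch lemma
  have hsame : ∀ u v : ℝ, u ∈ Set.Icc (0:ℝ) 1 → v ∈ Set.Icc (0:ℝ) 1 → u ≠ v →
      |u - v| ≤ δ → |f u - f v| ≤ δ → u ∉ Set.range p → v ∉ Set.range p →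
      ∃ j : Fin N, u ∈ Set.Ioo (p j.castSucc) (p j.succ) ∧
        v ∈ Set.Ioo (p j.castSucc) (p j.succ) := by
    have hcore : ∀ u v : ℝ, u ∈ Set.Icc (0:ℝ) 1 → v ∈ Set.Icc (0:ℝ) 1 → u < v →
        v - u ≤ δ → |f u - f v| ≤ δ → u ∉ Set.range p → v ∉ Set.range p →
        ∃ j : Fin N, u ∈ Set.Ioo (p j.castSucc) (p j.succ) ∧
          v ∈ Set.Ioo (p j.castSucc) (p j.succ) := by
      intro u v hu hv huv hd hfuv hup hvp
      obtain ⟨j, hjw⟩ := hPOS u hu hup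
      obtain ⟨j', hj'w⟩ := hPOS v hv hvp
      rcases eq_or_ne j j' with rfl | hne
      · exact ⟨j, hjw, hj'w⟩
      exfalso
      rcases lt_or_gt_of_ne hne with hlt | hgt
      · refine hstraddle u v hu hv huv hd ⟨j.succ, hjw.2, ?_⟩ hfuv
        have hle : (j.succ : Fin (N+1)) ≤ j'.castSucc := by
          rw [Fin.le_def]
          simp only [Fin.val_succ, Fin.coe_castSucc]
          exact hlt
        exact lt_of_le_of_lt (hp.monotone hle) hj'w.1
      · have hle : (j'.succ : Fin (N+1)) ≤ j.castSucc := by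
          rw [Fin.le_def]
          simp only [Fin.val_succ, Fin.coe_castSucc]
          exact hgt
        have : v < u := lt_trans (lt_of_lt_of_le hj'w.2 (hp.monotone hle)) hjw.1
        linarith
    intro u v hu hv hne hd hfuv hup hvp
    rcases lt_or_gt_of_ne hne with h | h
    · have hd' : v - u ≤ δ := by
        have : |u - v| = v - u := by rw [abs_sub_comm, abs_of_pos (by linarith)]
        linarith [hd, this.symm.le, this.le]
      exact hcore u v hu hv h hd' hfuv hup hvp
    · have hd' : u - v ≤ δ := by
        have : |u - v| = u - v := abs_of_pos (by linarith)
        linarith [this.le]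
      obtain ⟨j, h1, h2⟩ := hcore v u hv hu h hd' (by rw [abs_sub_comm]; exact hfuv) hvp hup
      exact ⟨j, h2, h1⟩
  -- hit lemmas
  have hhitR : ∀ (j : Fin N) (w : ℝ), w ∈ Set.Ioo (p j.castSucc) (p j.succ) →
      w - p j.castSucc ≤ δ → |f (p j.castSucc) - f w| ≤ δ → f (p j.castSucc) = 0 := by
    intro j w hw hwd hdist
    have hfw_ub : f w ≤ Λ * (w - p j.castSucc) := hUp j w hw
    have hfw_pos := (himg j w hw).1
    have hfq01 := hmaps (hpmem j.castSucc)
    have habs := abs_le.mp hdist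
    have hΛ0 : (0:ℝ) ≤ Λ := by linarith
    have hfqub : f (p j.castSucc) ≤ (Λ + 1) * δ := by
      have := mul_le_mul_of_nonneg_left hwd hΛ0
      nlinarith [habs.2]
    by_contra h0
    rcases eq_or_ne (f (p j.castSucc)) 1 with h1 | h1
    · rw [h1] at hfqub; linarith
    · have h2 := hβle j.castSucc h0 h1
      have h3 : β ≤ f (p j.castSucc) := le_trans h2 (min_le_left _ _)
      linarith
  have hhitL : ∀ (j : Fin N) (w : ℝ), w ∈ Set.Ioo (p j.castSucc) (p j.succ) →
      p j.succ - w ≤ δ → |f (p j.succ) - f w| ≤ δ → f (p j.succ) = 1 := by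
    intro j w hw hwd hdist
    have hfw_lb : 1 - Λ * (p j.succ - w) ≤ f w := hHigh j w hw
    have hfq01 := hmaps (hpmem j.succ)
    have habs := abs_le.mp hdist
    have hΛ0 : (0:ℝ) ≤ Λ := by linarith
    have hfqlb : 1 - (Λ + 1) * δ ≤ f (p j.succ) := by
      have := mul_le_mul_of_nonneg_left hwd hΛ0
      nlinarith [habs.1]
    by_contra h1
    rcases eq_or_ne (f (p j.succ)) 0 with h0 | h0
    · rw [h0] at hfqlb; linarith
    · have h2 := hβle j.succ h0 h1
      have h3 : β ≤ 1 - f (p j.succ) := le_trans h2 (min_le_right _ _)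
      linarith
  -- final lemma : X in partition, Y not, orbits stay close : contradiction
  have hfinal : ∀ X Y : ℝ, X ∈ Set.Icc (0:ℝ) 1 → Y ∈ Set.Icc (0:ℝ) 1 →
      (∀ k : ℕ, |f^[k] X - f^[k] Y| ≤ δ) → X ∈ Set.range p → Y ∉ Set.range p →
      Y ≠ X → False := by
    intro X Y hX hY hcl hXP hYP hne
    obtain ⟨j, hYj⟩ := hPOS Y hY hYP
    obtain ⟨iX, hiX⟩ := hXP
    have hd0 := hcl 0
    simp only [Function.iterate_zero_apply] at hd0
    have hd1pre := hcl 1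
    simp only [Function.iterate_one] at hd1pre
    rcases lt_or_gt_of_ne hne with hYX | hXY
    · -- LEFT case : Y < X, X is the right endpoint of branch j
      set d := X - Y with hdd
      have hdpos : 0 < d := by rw [hdd]; linarith
      have hdδ : d ≤ δ := by
        have : |X - Y| = d := by rw [hdd]; exact abs_of_pos hdpos
        rw [← this]
        exact hd0
      have hXb : X = p j.succ := by
        rcases lt_trichotomy X (p j.succ) with h | h | h
        · exfalso
          have hXin : p j.castSucc < X := lt_trans hYj.1 hYX
          have h1 : j.castSucc < iX := hp.lt_iff_lt.mp (by rw [hiX]; exact hXin)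
          have h2 : j.succ ≤ iX := Fin.castSucc_lt_iff_succ_le.mp h1
          have h3 := hp.monotone h2
          rw [hiX] at h3
          linarith
        · exact h
        · exfalso
          have h1 : p j.succ < p iX := by rw [hiX]; exact h
          have h2 := hPgap j.succ iX h1
          rw [hiX] at h2
          linarith [hYj.2, hδgap]
      have hfX1 : f X = 1 := by
        rw [hXb]
        exact hhitL j Y hYj (by rw [← hXb]; linarith) (by rw [← hXb]; exact hd1pre)
      set w₁ := f Y with hw₁
      have hw₁mem := himg j Y hYj
      have hw₁ub : w₁ ≤ 1 - d := by
        have h := hUp' j Y hYj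
        rw [← hXb] at h
        rw [hw₁, hdd]
        linarith
      have hw₁lb : 1 - δ ≤ w₁ := by
        have h := abs_le.mp hd1pre
        rw [hfX1] at h
        linarith [h.2]
      set j₁ : Fin N := ⟨N - 1, by omega⟩ with hj₁
      have hb₁ : p j₁.succ = 1 := by
        have h : (j₁.succ : Fin (N+1)) = Fin.last N :=
          Fin.ext (by simp only [Fin.val_succ, Fin.val_last, hj₁]; omega)
        rw [h, hpN]
      have ha₁ : p j₁.castSucc ≤ 1 - gap := by
        have h := hgap_le j₁
        rw [hb₁] at h
        linarith
      have hw₁O : w₁ ∈ Set.Ioo (p j₁.castSucc) (p j₁.succ) := by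
        constructor
        · linarith [hδgap]
        · rw [hb₁]; exact hw₁mem.2
      have h2dist : |f 1 - f w₁| ≤ δ := by
        have h := hcl 2
        have e1 : f^[2] X = f 1 := by
          rw [show (2:ℕ) = 1 + 1 from rfl, Function.iterate_succ_apply, Function.iterate_one,
            hfX1]
        have e2 : f^[2] Y = f w₁ := by
          rw [show (2:ℕ) = 1 + 1 from rfl, Function.iterate_succ_apply, Function.iterate_one,
            hw₁]
        rw [e1, e2] at h
        exact h
      have hf1 : f 1 = 1 := by
        have h := hhitL j₁ w₁ hw₁O (by rw [hb₁]; linarith) (by rw [hb₁]; exact h2dist)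
        rw [hb₁] at h
        exact h
      have h1iter : ∀ k : ℕ, f^[k] (1:ℝ) = 1 := by
        intro k
        induction k with
        | zero => simp
        | succ k ih => rw [Function.iterate_succ_apply', ih, hf1]
      have hXit : ∀ k : ℕ, f^[k + 1] X = 1 := by
        intro k
        rw [Function.iterate_add_apply, Function.iterate_one, hfX1, h1iter]
      have hciter : ∀ k : ℕ, f^[k + 1] Y = f^[k] w₁ := by
        intro k
        rw [Function.iterate_add_apply, Function.iterate_one, hw₁]
      have hcd : ∀ k : ℕ, 1 - f^[k] w₁ ≤ δ := by
        intro k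
        have h := hcl (k + 1)
        rw [hXit k, hciter k] at h
        exact le_trans (le_abs_self _) h
      obtain ⟨ε, hεpos, hE⟩ := hexp (d / 2) (by linarith)
      have hGR : ∀ t : ℝ, t ∈ Set.Ioo (p j₁.castSucc) (p j₁.succ) → t ≤ 1 - d →
          f t ≤ t - ε / 2 := by
        intro t ht htd
        set u' := 1 - min d ε / 2 with hu'
        have hmin_pos : 0 < min d ε := lt_min hdpos hεpos
        have hmind : min d ε ≤ d := min_le_left _ _
        have hmine : min d ε ≤ ε := min_le_right _ _
        have hu'O : u' ∈ Set.Ioo (p j₁.castSucc) (p j₁.succ) := by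
          constructor
          · rw [hu']; linarith [hδgap, ha₁]
          · rw [hb₁, hu']; linarith
        have hsep : t + d / 2 ≤ u' := by rw [hu']; linarith
        have h := hE j₁ t u' ht hu'O hsep
        have hu'le : f u' ≤ 1 := (hmaps (hIoo_sub j₁ hu'O)).2
        rw [hu'] at h hu'le
        linarith
      have hinv : ∀ k : ℕ, f^[k] w₁ ∈ Set.Ioo (p j₁.castSucc) (p j₁.succ) ∧
          f^[k] w₁ ≤ 1 - d - k * (ε / 2) := by
        intro k
        induction k with
        | zero =>
          refine ⟨by simpa using hw₁O, by simpa using hw₁ub⟩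
        | succ k ih =>
          obtain ⟨hO, hub⟩ := ih
          have hstep : f^[k+1] w₁ = f (f^[k] w₁) := Function.iterate_succ_apply' f k w₁
          have htd : f^[k] w₁ ≤ 1 - d := by
            have hk0 : (0:ℝ) ≤ (k:ℝ) * (ε / 2) := by positivity
            linarith
          have hg := hGR _ hO htd
          constructor
          · constructor
            · have h := hcd (k+1)
              rw [hstep] at h ⊢
              linarith [hδgap, ha₁]
            · rw [hstep, hb₁]
              exact (himg j₁ _ hO).2
          · rw [hstep]
            push_cast
            linarith
      obtain ⟨n, hn⟩ := exists_nat_gt (δ / (ε / 2))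
      have h1 := (hinv n).2
      have h2 := hcd n
      have h3 : δ < n * (ε / 2) := by
        rw [div_lt_iff₀ (by linarith)] at hn
        linarith
      linarith
    · -- RIGHT case : X < Y, X is the left endpoint of branch j
      set d := Y - X with hdd
      have hdpos : 0 < d := by rw [hdd]; linarith
      have hdδ : d ≤ δ := by
        have : |X - Y| = d := by rw [hdd, abs_sub_comm]; exact abs_of_pos hdpos
        rw [← this]
        exact hd0
      have hXa : X = p j.castSucc := by
        rcases lt_trichotomy X (p j.castSucc) with h | h | h
        · exfalso
          have h1 : p iX < p j.castSucc := by rw [hiX]; exact h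
          have h2 := hPgap iX j.castSucc h1
          rw [hiX] at h2
          linarith [hYj.1, hδgap]
        · exact h
        · exfalso
          have h1 : j.castSucc < iX := hp.lt_iff_lt.mp (by rw [hiX]; exact h)
          have h2 : j.succ ≤ iX := Fin.castSucc_lt_iff_succ_le.mp h1
          have h3 := hp.monotone h2
          rw [hiX] at h3
          linarith [hYj.2]
      have hfX0 : f X = 0 := by
        rw [hXa]
        exact hhitR j Y hYj (by rw [← hXa]; linarith) (by rw [← hXa]; exact hd1pre)
      set w₁ := f Y with hw₁
      have hw₁mem := himg j Y hYj
      have hw₁lb : d ≤ w₁ := by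
        have h := hLow j Y hYj
        rw [← hXa] at h
        rw [hw₁, hdd]
        linarith
      have hw₁ub : w₁ ≤ δ := by
        have h := abs_le.mp hd1pre
        rw [hfX0] at h
        linarith [h.1]
      set j₀ : Fin N := ⟨0, hN⟩ with hj₀
      have ha₀ : p j₀.castSucc = 0 := by
        have h : (j₀.castSucc : Fin (N+1)) = 0 := Fin.ext (by simp [hj₀])
        rw [h, hp0]
      have hb₀ : gap ≤ p j₀.succ := by
        have h := hgap_le j₀
        rw [ha₀] at h
        linarith
      have hw₁O : w₁ ∈ Set.Ioo (p j₀.castSucc) (p j₀.succ) := by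
        constructor
        · rw [ha₀]; exact hw₁mem.1
        · linarith [hδgap]
      have h2dist : |f 0 - f w₁| ≤ δ := by
        have h := hcl 2
        have e1 : f^[2] X = f 0 := by
          rw [show (2:ℕ) = 1 + 1 from rfl, Function.iterate_succ_apply, Function.iterate_one,
            hfX0]
        have e2 : f^[2] Y = f w₁ := by
          rw [show (2:ℕ) = 1 + 1 from rfl, Function.iterate_succ_apply, Function.iterate_one,
            hw₁]
        rw [e1, e2] at h
        exact h
      have hf0 : f 0 = 0 := by
        have h := hhitR j₀ w₁ hw₁O (by rw [ha₀]; linarith) (by rw [ha₀]; exact h2dist)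
        rw [ha₀] at h
        exact h
      have h0iter : ∀ k : ℕ, f^[k] (0:ℝ) = 0 := by
        intro k
        induction k with
        | zero => simp
        | succ k ih => rw [Function.iterate_succ_apply', ih, hf0]
      have hXit : ∀ k : ℕ, f^[k + 1] X = 0 := by
        intro k
        rw [Function.iterate_add_apply, Function.iterate_one, hfX0, h0iter]
      have hciter : ∀ k : ℕ, f^[k + 1] Y = f^[k] w₁ := by
        intro k
        rw [Function.iterate_add_apply, Function.iterate_one, hw₁]
      have hcd : ∀ k : ℕ, f^[k] w₁ ≤ δ := by
        intro k
        have h := hcl (k + 1)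
        rw [hXit k, hciter k] at h
        have h2 : f^[k] w₁ ≤ |0 - f^[k] w₁| := by
          rw [zero_sub, abs_neg]
          exact le_abs_self _
        linarith
      obtain ⟨ε, hεpos, hE⟩ := hexp (d / 2) (by linarith)
      have hGR : ∀ t : ℝ, t ∈ Set.Ioo (p j₀.castSucc) (p j₀.succ) → d ≤ t →
          t + ε / 2 ≤ f t := by
        intro t ht hdt
        set u' := min d ε / 2 with hu'
        have hmin_pos : 0 < min d ε := lt_min hdpos hεpos
        have hmind : min d ε ≤ d := min_le_left _ _
        have hmine : min d ε ≤ ε := min_le_right _ _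
        have hu'O : u' ∈ Set.Ioo (p j₀.castSucc) (p j₀.succ) := by
          constructor
          · rw [ha₀, hu']; linarith
          · rw [hu']; linarith [hδgap, hb₀]
        have hsep : u' + d / 2 ≤ t := by rw [hu']; linarith
        have h := hE j₀ u' t hu'O ht hsep
        have hu'ge : 0 ≤ f u' := (hmaps (hIoo_sub j₀ hu'O)).1
        rw [hu'] at h
        linarith
      have hinv : ∀ k : ℕ, f^[k] w₁ ∈ Set.Ioo (p j₀.castSucc) (p j₀.succ) ∧
          d + k * (ε / 2) ≤ f^[k] w₁ := by
        intro k
        induction k with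
        | zero =>
          refine ⟨by simpa using hw₁O, by simpa using hw₁lb⟩
        | succ k ih =>
          obtain ⟨hO, hlb⟩ := ih
          have hstep : f^[k+1] w₁ = f (f^[k] w₁) := Function.iterate_succ_apply' f k w₁
          have hdt : d ≤ f^[k] w₁ := by
            have hk0 : (0:ℝ) ≤ (k:ℝ) * (ε / 2) := by positivity
            linarith
          have hg := hGR _ hO hdt
          constructor
          · constructor
            · rw [hstep, ha₀]
              exact (himg j₀ _ hO).1
            · have h := hcd (k+1)
              rw [hstep] at h ⊢
              linarith [hδgap, hb₀]
          · rw [hstep]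
            push_cast
            linarith
      obtain ⟨n, hn⟩ := exists_nat_gt (δ / (ε / 2))
      have h1 := (hinv n).2
      have h2 := hcd n
      have h3 : δ < n * (ε / 2) := by
        rw [div_lt_iff₀ (by linarith)] at hn
        linarith
      linarith
  -- the key ordered lemma
  have key : ∀ a b : ℝ, a ∈ Set.Icc (0:ℝ) 1 → b ∈ Set.Icc (0:ℝ) 1 → a < b →
      (∀ n : ℕ, |f^[n] a - f^[n] b| ≤ δ) → False := by
    intro a b ha hb hab hcl
    by_cases hbad : ∃ n : ℕ, f^[n] a ∈ Set.range p ∨ f^[n] b ∈ Set.range p ∨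
        f^[n] a = f^[n] b
    · set n₀ := Nat.find hbad with hn₀
      have hspec := Nat.find_spec hbad
      have hmin : ∀ m, m < n₀ → ¬(f^[m] a ∈ Set.range p ∨ f^[m] b ∈ Set.range p ∨
          f^[m] a = f^[m] b) := fun m hm => Nat.find_min hbad hm
      have hane : f^[n₀] a ≠ f^[n₀] b := by
        rcases Nat.eq_zero_or_pos n₀ with h0 | h0
        · rw [h0]
          simpa using ne_of_lt hab
        · obtain ⟨m, hm⟩ : ∃ m, n₀ = m + 1 := ⟨n₀ - 1, by omega⟩
          have hgm := hmin m (by omega)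
          push_neg at hgm
          obtain ⟨hap, hbp, hne'⟩ := hgm
          have hnext : |f (f^[m] a) - f (f^[m] b)| ≤ δ := by
            have h := hcl (m + 1)
            rw [Function.iterate_succ_apply', Function.iterate_succ_apply'] at h
            exact h
          obtain ⟨j, hja, hjb⟩ := hsame (f^[m] a) (f^[m] b) (hicc m a ha) (hicc m b hb)
            hne' (hcl m) hnext hap hbp
          rw [hm, Function.iterate_succ_apply', Function.iterate_succ_apply']
          exact fun heq => hne' ((hmono j).injOn hja hjb heq)
      have hbothP : ¬(f^[n₀] a ∈ Set.range p ∧ f^[n₀] b ∈ Set.range p) := by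
        rintro ⟨⟨i, hi⟩, ⟨i', hi'⟩⟩
        have habs := abs_le.mp (hcl n₀)
        rcases lt_trichotomy (f^[n₀] a) (f^[n₀] b) with h | h | h
        · have hg := hPgap i i' (by rw [hi, hi']; exact h)
          rw [hi, hi'] at hg
          linarith [hδgap]
        · exact hane h
        · have hg := hPgap i' i (by rw [hi, hi']; exact h)
          rw [hi, hi'] at hg
          linarith [hδgap]
      rcases hspec with hPa | hPb | heq
      · have hbnP : f^[n₀] b ∉ Set.range p := fun hPb => hbothP ⟨hPa, hPb⟩
        exact hfinal (f^[n₀] a) (f^[n₀] b) (hicc n₀ a ha) (hicc n₀ b hb)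
          (fun k => by
            rw [← Function.iterate_add_apply, ← Function.iterate_add_apply]
            exact hcl (k + n₀)) hPa hbnP (Ne.symm hane)
      · have hanP : f^[n₀] a ∉ Set.range p := fun hPa => hbothP ⟨hPa, hPb⟩
        exact hfinal (f^[n₀] b) (f^[n₀] a) (hicc n₀ b hb) (hicc n₀ a ha)
          (fun k => by
            rw [← Function.iterate_add_apply, ← Function.iterate_add_apply,
              abs_sub_comm]
            exact hcl (k + n₀)) hPb hanP hane
      · exact hane heq
    · push_neg at hbad
      obtain ⟨ε, hεpos, hE⟩ := hexp (b - a) (by linarith)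
      have hinv : ∀ n : ℕ, f^[n] a < f^[n] b ∧
          (b - a) + n * ε ≤ f^[n] b - f^[n] a := by
        intro n
        induction n with
        | zero => exact ⟨by simpa using hab, by simp⟩
        | succ n ih =>
          obtain ⟨hlt, hge⟩ := ih
          have hb3 := hbad n
          have hdn : |f^[n] a - f^[n] b| ≤ δ := hcl n
          have hnext : |f (f^[n] a) - f (f^[n] b)| ≤ δ := by
            have h := hcl (n + 1)
            rw [Function.iterate_succ_apply', Function.iterate_succ_apply'] at h
            exact h
          obtain ⟨j, hja, hjb⟩ := hsame (f^[n] a) (f^[n] b) (hicc n a ha) (hicc n b hb)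
            hb3.2.2 hdn hnext hb3.1 hb3.2.1
          have hk0 : (0:ℝ) ≤ (n:ℝ) * ε := by positivity
          have hstep := hE j (f^[n] a) (f^[n] b) hja hjb (by linarith)
          constructor
          · rw [Function.iterate_succ_apply', Function.iterate_succ_apply']
            linarith
          · rw [Function.iterate_succ_apply', Function.iterate_succ_apply']
            push_cast
            linarith
      obtain ⟨n, hn⟩ := exists_nat_gt (δ / ε)
      have h1 := (hinv n).2
      have h2 := abs_le.mp (hcl n)
      have h3 : δ < n * ε := by
        rw [div_lt_iff₀ hεpos] at hn
        linarith
      linarith [h2.1]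
  -- conclusion
  refine ⟨δ, hδpos, ?_⟩
  intro x hx y hy hcl
  by_contra hxy
  rcases lt_trichotomy x y with h | h | h
  · exact key x y hx hy h hcl
  · exact hxy h
  · exact key y x hy hx h (fun n => by rw [abs_sub_comm]; exact hcl n)
end
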